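/- arXiv:2003.13766 — 8 statements merged into one kernel-verified Lean document; each statement's English description precedes it below -/
import Mathlib

section
/- Assume the mixGK setup. Then for every y ∈ ℝᵏ, ‖D_k(γ) y − c‖₂ = ‖L_R A Q V_k y − L_R b‖₂, where Q = γQ₁ + (1−γ)Q₂ and c = (β₁e₁; 0) ∈ ℝ^{2k+1}. -/
open Matrix

/-- The Euclidean (ℓ₂) norm of a vector. -/
noncomputable def l2norm {ι : Type*} [Fintype ι] (v : ι → ℝ) : ℝ :=
  Real.sqrt (v ⬝ᵥ v)

lemma dot_mulVec_mulVec {p q r : ℕ} (M : Matrix (Fin p) (Fin q) ℝ)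
    (N : Matrix (Fin p) (Fin r) ℝ) (a : Fin q → ℝ) (b : Fin r → ℝ) :
    (M *ᵥ a) ⬝ᵥ (N *ᵥ b) = a ⬝ᵥ ((Mᵀ * N) *ᵥ b) := by
  rw [Matrix.dotProduct_mulVec, Matrix.dotProduct_mulVec, ← Matrix.vecMul_vecMul,
    Matrix.vecMul_transpose]

lemma orth_dot {p q r : ℕ} (M : Matrix (Fin p) (Fin q) ℝ) (N : Matrix (Fin p) (Fin r) ℝ)
    (hM : Mᵀ * M = 1) (hN : Nᵀ * N = 1) (hMN : Mᵀ * N = 0) (a : Fin q → ℝ) (d : Fin r → ℝ) :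
    (M *ᵥ a + N *ᵥ d) ⬝ᵥ (M *ᵥ a + N *ᵥ d) = a ⬝ᵥ a + d ⬝ᵥ d := by
  have hNM : Nᵀ * M = 0 := by
    have := congrArg Matrix.transpose hMN
    simpa [Matrix.transpose_mul] using this
  rw [add_dotProduct, dotProduct_add, dotProduct_add,
    dot_mulVec_mulVec, dot_mulVec_mulVec, dot_mulVec_mulVec, dot_mulVec_mulVec,
    hM, hN, hMN, hNM]
  simp [Matrix.one_mulVec]

theorem stmt_8 {m n k : ℕ}
    (A : Matrix (Fin m) (Fin n) ℝ) (R LR : Matrix (Fin m) (Fin m) ℝ)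
    (Q₁ Q₂ : Matrix (Fin n) (Fin n) ℝ) (b : Fin m → ℝ) (β₁ γ : ℝ)
    (U : Matrix (Fin m) (Fin (k + 1)) ℝ) (V : Matrix (Fin n) (Fin k) ℝ)
    (B : Matrix (Fin (k + 1)) (Fin k) ℝ)
    (Y : Matrix (Fin m) (Fin k) ℝ) (Rk : Matrix (Fin k) (Fin k) ℝ)
    (hR : R.PosDef) (hLR : R⁻¹ = LRᵀ * LR)
    (hQ1 : Q₁.PosDef) (hQ2 : Q₂.PosSemidef)
    (hγ0 : 0 < γ) (hγ1 : γ ≤ 1) (hβ : 0 < β₁)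
    (hb : U *ᵥ (β₁ • (Pi.single 0 1 : Fin (k + 1) → ℝ)) = b)
    (hAQV : A * Q₁ * V = U * B)
    (hU : Uᵀ * R⁻¹ * U = 1) (hV : Vᵀ * Q₁ * V = 1)
    (hY : Yᵀ * Y = 1) (hUY : (LR * U)ᵀ * Y = 0)
    (hRtri : Rk.BlockTriangular id)
    (hQR : ((1 : Matrix (Fin m) (Fin m) ℝ) - (LR * U) * (LR * U)ᵀ) * (LR * A * Q₂ * V) = Y * Rk)
    (Q : Matrix (Fin n) (Fin n) ℝ) (hQ : Q = γ • Q₁ + (1 - γ) • Q₂)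
    (D : Matrix (Fin (k + 1) ⊕ Fin k) (Fin k) ℝ)
    (hD : D = fromRows (γ • B + (1 - γ) • ((LR * U)ᵀ * (LR * A * Q₂ * V))) ((1 - γ) • Rk))
    (c : Fin (k + 1) ⊕ Fin k → ℝ) (hc : c = Sum.elim (β₁ • (Pi.single 0 1 : Fin (k + 1) → ℝ)) (0 : Fin k → ℝ)) :
    ∀ y : Fin k → ℝ,
      l2norm (D *ᵥ y - c) = l2norm ((LR * A * Q * V) *ᵥ y - LR *ᵥ b) := by
  intro y
  have hUtU : (LR * U)ᵀ * (LR * U) = 1 := by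
    have h1 : Uᵀ * (LRᵀ * LR) * U = 1 := by rw [← hLR]; exact hU
    simpa [Matrix.transpose_mul, Matrix.mul_assoc] using h1
  have hYU : Yᵀ * (LR * U) = 0 := by
    have := congrArg Matrix.transpose hUY
    simpa [Matrix.transpose_mul] using this
  have hX : LR * A * Q₂ * V
      = (LR * U) * ((LR * U)ᵀ * (LR * A * Q₂ * V)) + Y * Rk := by
    have h := hQR
    rw [Matrix.sub_mul, Matrix.one_mul, Matrix.mul_assoc (LR * U) (LR * U)ᵀ] at h
    exact sub_eq_iff_eq_add'.mp h
  have e1 : LR * A * Q₁ * V = (LR * U) * B := by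
    calc LR * A * Q₁ * V = LR * (A * Q₁ * V) := by simp [Matrix.mul_assoc]
      _ = LR * (U * B) := by rw [hAQV]
      _ = (LR * U) * B := by simp [Matrix.mul_assoc]
  set T := (LR * U)ᵀ * (LR * A * Q₂ * V) with hT
  have hM : LR * A * Q * V
      = (LR * U) * (γ • B + (1 - γ) • T) + Y * ((1 - γ) • Rk) := by
    have expand : LR * A * Q * V
        = γ • (LR * A * Q₁ * V) + (1 - γ) • (LR * A * Q₂ * V) := by
      rw [hQ]
      simp only [Matrix.mul_add, Matrix.add_mul, Matrix.mul_smul, Matrix.smul_mul]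
    rw [expand, e1, hX]
    simp only [Matrix.mul_add, Matrix.mul_smul, smul_add]
    abel
  set a := (γ • B + (1 - γ) • T) *ᵥ y - β₁ • (Pi.single 0 1 : Fin (k + 1) → ℝ) with ha
  set d := ((1 - γ) • Rk) *ᵥ y with hd
  have hLRb : LR *ᵥ b = (LR * U) *ᵥ (β₁ • (Pi.single 0 1 : Fin (k + 1) → ℝ)) := by
    rw [← hb, Matrix.mulVec_mulVec]
  have hvec : (LR * A * Q * V) *ᵥ y - LR *ᵥ b = (LR * U) *ᵥ a + Y *ᵥ d := by
    rw [hM, Matrix.add_mulVec, ha, hd, Matrix.mulVec_sub, Matrix.mulVec_mulVec,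
      Matrix.mulVec_mulVec, hLRb]
    abel
  have hLeft : D *ᵥ y - c = Sum.elim a d := by
    rw [hD, hc, Matrix.fromRows_mulVec]
    funext i
    rcases i with i | i <;> simp [ha, hd, Pi.sub_apply]
  have hdot : (D *ᵥ y - c) ⬝ᵥ (D *ᵥ y - c)
      = ((LR * A * Q * V) *ᵥ y - LR *ᵥ b) ⬝ᵥ ((LR * A * Q * V) *ᵥ y - LR *ᵥ b) := by
    rw [hLeft, hvec, sumElim_dotProduct_sumElim,
      orth_dot (LR * U) Y hUtU hY hUY a d]
  unfold l2norm
  rw [hdot]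
end

section
/- Assume the mixGK setup. Then D_k(γ)ᵀD_k(γ) = (L_R A Q V_k)ᵀ(L_R A Q V_k) and D_k(γ)ᵀ c = (L_R A Q V_k)ᵀ L_R b, where Q = γQ₁ + (1−γ)Q₂ and c = (β₁e₁; 0) ∈ ℝ^{2k+1}. -/
open Matrix

lemma aux_mixGK {m k1 k2 kk : Type*} [Fintype m] [Fintype k1] [Fintype k2] [Fintype kk]
    [DecidableEq k1] [DecidableEq k2]
    (P : Matrix m k1 ℝ) (Y : Matrix m k2 ℝ) (D₁ : Matrix k1 kk ℝ) (D₂ : Matrix k2 kk ℝ)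
    (hP : Pᵀ * P = 1) (hYY : Yᵀ * Y = 1) (hPY : Pᵀ * Y = 0) :
    (P * D₁ + Y * D₂)ᵀ * (P * D₁ + Y * D₂) = D₁ᵀ * D₁ + D₂ᵀ * D₂ ∧
    (P * D₁ + Y * D₂)ᵀ * P = D₁ᵀ := by
  have hYP : Yᵀ * P = 0 := by
    have := congrArg transpose hPY; simpa using this
  constructor
  · rw [transpose_add, transpose_mul, transpose_mul, Matrix.add_mul, Matrix.mul_add, Matrix.mul_add]
    rw [Matrix.mul_assoc (D₁ᵀ), ← Matrix.mul_assoc Pᵀ, hP, Matrix.one_mul]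
    rw [Matrix.mul_assoc (D₁ᵀ), ← Matrix.mul_assoc Pᵀ, hPY, Matrix.zero_mul, Matrix.mul_zero]
    rw [Matrix.mul_assoc (D₂ᵀ), ← Matrix.mul_assoc Yᵀ, hYP, Matrix.zero_mul, Matrix.mul_zero]
    rw [Matrix.mul_assoc (D₂ᵀ), ← Matrix.mul_assoc Yᵀ, hYY, Matrix.one_mul]
    rw [add_zero, zero_add]
  · rw [transpose_add, transpose_mul, transpose_mul, Matrix.add_mul]
    rw [Matrix.mul_assoc (D₁ᵀ), hP, Matrix.mul_one]
    rw [Matrix.mul_assoc (D₂ᵀ), hYP, Matrix.mul_zero, add_zero]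

theorem stmt_9 {m n k : ℕ}
    (A : Matrix (Fin m) (Fin n) ℝ) (R LR : Matrix (Fin m) (Fin m) ℝ)
    (Q₁ Q₂ : Matrix (Fin n) (Fin n) ℝ) (b : Fin m → ℝ) (β₁ γ : ℝ)
    (U : Matrix (Fin m) (Fin (k + 1)) ℝ) (V : Matrix (Fin n) (Fin k) ℝ)
    (B : Matrix (Fin (k + 1)) (Fin k) ℝ)
    (Y : Matrix (Fin m) (Fin k) ℝ) (Rk : Matrix (Fin k) (Fin k) ℝ)
    (hR : R.PosDef) (hLR : R⁻¹ = LRᵀ * LR)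
    (hQ1 : Q₁.PosDef) (hQ2 : Q₂.PosSemidef)
    (hγ0 : 0 < γ) (hγ1 : γ ≤ 1) (hβ : 0 < β₁)
    (hb : U *ᵥ (β₁ • (Pi.single 0 1 : Fin (k + 1) → ℝ)) = b)
    (hAQV : A * Q₁ * V = U * B)
    (hU : Uᵀ * R⁻¹ * U = 1) (hV : Vᵀ * Q₁ * V = 1)
    (hY : Yᵀ * Y = 1) (hUY : (LR * U)ᵀ * Y = 0)
    (hRtri : Rk.BlockTriangular id)
    (hQR : ((1 : Matrix (Fin m) (Fin m) ℝ) - (LR * U) * (LR * U)ᵀ) * (LR * A * Q₂ * V) = Y * Rk)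
    (Q : Matrix (Fin n) (Fin n) ℝ) (hQ : Q = γ • Q₁ + (1 - γ) • Q₂)
    (D : Matrix (Fin (k + 1) ⊕ Fin k) (Fin k) ℝ)
    (hD : D = fromRows (γ • B + (1 - γ) • ((LR * U)ᵀ * (LR * A * Q₂ * V))) ((1 - γ) • Rk))
    (c : Fin (k + 1) ⊕ Fin k → ℝ) (hc : c = Sum.elim (β₁ • (Pi.single 0 1 : Fin (k + 1) → ℝ)) (0 : Fin k → ℝ)) :
    Dᵀ * D = (LR * A * Q * V)ᵀ * (LR * A * Q * V) ∧
    Dᵀ *ᵥ c = (LR * A * Q * V)ᵀ *ᵥ (LR *ᵥ b) := by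
  have hP : (LR * U)ᵀ * (LR * U) = 1 := by
    rw [transpose_mul]
    calc Uᵀ * LRᵀ * (LR * U) = Uᵀ * (LRᵀ * LR) * U := by
          simp only [Matrix.mul_assoc]
      _ = 1 := by rw [← hLR, hU]
  have hWdec : LR * A * Q₂ * V
      = (LR * U) * ((LR * U)ᵀ * (LR * A * Q₂ * V)) + Y * Rk := by
    rw [← hQR, Matrix.sub_mul, Matrix.one_mul,
      Matrix.mul_assoc (LR * U) (LR * U)ᵀ (LR * A * Q₂ * V)]
    abel
  have hM : LR * A * Q * V = (LR * U) * (γ • B + (1 - γ) • ((LR * U)ᵀ * (LR * A * Q₂ * V)))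
      + Y * ((1 - γ) • Rk) := by
    have h1 : LR * A * Q₁ * V = (LR * U) * B := by
      rw [Matrix.mul_assoc LR U B, ← hAQV]
      simp only [Matrix.mul_assoc]
    rw [hQ]
    have expand : LR * A * (γ • Q₁ + (1 - γ) • Q₂) * V
        = γ • (LR * A * Q₁ * V) + (1 - γ) • (LR * A * Q₂ * V) := by
      rw [Matrix.mul_add, Matrix.add_mul, Matrix.mul_smul, Matrix.mul_smul,
        Matrix.smul_mul, Matrix.smul_mul]
    rw [expand, h1]
    conv_lhs => rw [hWdec]
    rw [Matrix.mul_add, Matrix.mul_smul, Matrix.mul_smul, Matrix.mul_smul, smul_add]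
    abel
  obtain ⟨haux1, haux2⟩ := aux_mixGK (LR * U) Y
    (γ • B + (1 - γ) • ((LR * U)ᵀ * (LR * A * Q₂ * V))) ((1 - γ) • Rk) hP hY hUY
  constructor
  · rw [hM, haux1, hD, transpose_fromRows, fromCols_mul_fromRows]
  · rw [hD, hc, transpose_fromRows, fromCols_mulVec_sumElim, Matrix.mulVec_zero, add_zero]
    rw [← hb, hM, Matrix.mulVec_mulVec, Matrix.mulVec_mulVec, Matrix.mul_assoc _ LR U, haux2]
end

section
/- (Theorem 3.1) Assume the mixGK setup with k = n, so that V_n ∈ ℝ^{n×n} (hence, since V_nᵀQ₁V_n = I_n, the matrix V_n is invertible). Let λ > 0 and μ ∈ ℝⁿ, and let y_n(λ,γ) = (D_n(γ)ᵀD_n(γ) + λ²γI_n + λ²(1−γ)V_nᵀQ₂V_n)⁻¹ D_n(γ)ᵀ c be the exact solution of the projected problem. Then the matrices D_n(γ)ᵀD_n(γ) + λ²γI_n + λ²(1−γ)V_nᵀQ₂V_n and AᵀR⁻¹AQ + λ²I_n are invertible, and the n-th mixGK iterate s_n = μ + Q V_n y_n(λ,γ) equals the MAP estimate s_MAP = μ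 + Q(AᵀR⁻¹AQ + λ²I_n)⁻¹AᵀR⁻¹b. -/
open Matrix

lemma posDef_smul_of_pos {n : Type*} [Fintype n] [DecidableEq n] {c : ℝ} (hc : 0 < c)
    {A : Matrix n n ℝ} (hA : A.PosDef) : (c • A).PosDef := by
  refine ⟨?_, fun x hx => ?_⟩
  · unfold Matrix.IsHermitian
    rw [conjTranspose_smul, hA.1.eq]
    simp
  · exact (hA.smul hc).2 hx

lemma posSemidef_smul_of_nonneg {n : Type*} [Fintype n] [DecidableEq n] {c : ℝ} (hc : 0 ≤ c)
    {A : Matrix n n ℝ} (hA : A.PosSemidef) : (c • A).PosSemidef := by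
  refine ⟨?_, fun x => ?_⟩
  · unfold Matrix.IsHermitian
    rw [conjTranspose_smul, hA.1.eq]
    simp
  · exact (hA.smul hc).2 x

lemma aux_orth_mul {m p q r : Type*} [Fintype m] [Fintype p] [Fintype q] [DecidableEq p] [DecidableEq q]
    (Ut : Matrix m p ℝ) (Y : Matrix m q ℝ) (T : Matrix p r ℝ) (S : Matrix q r ℝ)
    (h1 : Utᵀ * Ut = 1) (h2 : Utᵀ * Y = 0) (h3 : Yᵀ * Y = 1) :
    (Ut * T + Y * S)ᵀ * (Ut * T + Y * S) = Tᵀ * T + Sᵀ * S := by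
  have h2' : Yᵀ * Ut = 0 := by
    have := congrArg Matrix.transpose h2
    simpa [Matrix.transpose_mul] using this
  have e11 : Tᵀ * Utᵀ * (Ut * T) = Tᵀ * T := by
    rw [Matrix.mul_assoc, ← Matrix.mul_assoc Utᵀ, h1, Matrix.one_mul]
  have e12 : Tᵀ * Utᵀ * (Y * S) = 0 := by
    rw [Matrix.mul_assoc, ← Matrix.mul_assoc Utᵀ, h2, Matrix.zero_mul, Matrix.mul_zero]
  have e21 : Sᵀ * Yᵀ * (Ut * T) = 0 := by
    rw [Matrix.mul_assoc, ← Matrix.mul_assoc Yᵀ, h2', Matrix.zero_mul, Matrix.mul_zero]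
  have e22 : Sᵀ * Yᵀ * (Y * S) = Sᵀ * S := by
    rw [Matrix.mul_assoc, ← Matrix.mul_assoc Yᵀ, h3, Matrix.one_mul]
  simp only [Matrix.transpose_add, Matrix.transpose_mul, Matrix.add_mul, Matrix.mul_add,
    e11, e12, e21, e22]
  abel

lemma aux_orth_proj {m p q r : Type*} [Fintype m] [Fintype p] [Fintype q] [DecidableEq p] [DecidableEq q]
    (Ut : Matrix m p ℝ) (Y : Matrix m q ℝ) (T : Matrix p r ℝ) (S : Matrix q r ℝ)
    (h1 : Utᵀ * Ut = 1) (h2 : Utᵀ * Y = 0) :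
    (Ut * T + Y * S)ᵀ * Ut = Tᵀ := by
  have h2' : Yᵀ * Ut = 0 := by
    have := congrArg Matrix.transpose h2
    simpa [Matrix.transpose_mul] using this
  simp only [Matrix.transpose_add, Matrix.transpose_mul, Matrix.add_mul]
  rw [Matrix.mul_assoc Tᵀ, h1, Matrix.mul_one, Matrix.mul_assoc Sᵀ, h2', Matrix.mul_zero,
    add_zero]

theorem stmt_10 {m n : ℕ}
    (A : Matrix (Fin m) (Fin n) ℝ) (R LR : Matrix (Fin m) (Fin m) ℝ)
    (Q₁ Q₂ : Matrix (Fin n) (Fin n) ℝ) (b : Fin m → ℝ) (β₁ γ : ℝ)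
    (U : Matrix (Fin m) (Fin (n + 1)) ℝ) (V : Matrix (Fin n) (Fin n) ℝ)
    (B : Matrix (Fin (n + 1)) (Fin n) ℝ)
    (Y : Matrix (Fin m) (Fin n) ℝ) (Rk : Matrix (Fin n) (Fin n) ℝ)
    (hR : R.PosDef) (hLR : R⁻¹ = LRᵀ * LR)
    (hQ1 : Q₁.PosDef) (hQ2 : Q₂.PosSemidef)
    (hγ0 : 0 < γ) (hγ1 : γ ≤ 1) (hβ : 0 < β₁)
    (hb : U *ᵥ (β₁ • (Pi.single 0 1 : Fin (n + 1) → ℝ)) = b)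
    (hAQV : A * Q₁ * V = U * B)
    (hU : Uᵀ * R⁻¹ * U = 1) (hV : Vᵀ * Q₁ * V = 1)
    (hY : Yᵀ * Y = 1) (hUY : (LR * U)ᵀ * Y = 0)
    (hRtri : Rk.BlockTriangular id)
    (hQR : ((1 : Matrix (Fin m) (Fin m) ℝ) - (LR * U) * (LR * U)ᵀ) * (LR * A * Q₂ * V) = Y * Rk)
    (Q : Matrix (Fin n) (Fin n) ℝ) (hQ : Q = γ • Q₁ + (1 - γ) • Q₂)
    (D : Matrix (Fin (n + 1) ⊕ Fin n) (Fin n) ℝ)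
    (hD : D = fromRows (γ • B + (1 - γ) • ((LR * U)ᵀ * (LR * A * Q₂ * V))) ((1 - γ) • Rk))
    (c : Fin (n + 1) ⊕ Fin n → ℝ) (hc : c = Sum.elim (β₁ • (Pi.single 0 1 : Fin (n + 1) → ℝ)) (0 : Fin n → ℝ))
    (lam : ℝ) (hlam : 0 < lam) (μ : Fin n → ℝ)
    (M : Matrix (Fin n) (Fin n) ℝ)
    (hM : M = Dᵀ * D + (lam ^ 2 * γ) • (1 : Matrix (Fin n) (Fin n) ℝ)
        + (lam ^ 2 * (1 - γ)) • (Vᵀ * Q₂ * V))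
    (y : Fin n → ℝ) (hy : y = M⁻¹ *ᵥ (Dᵀ *ᵥ c)) :
    IsUnit M ∧
    IsUnit (Aᵀ * R⁻¹ * A * Q + (lam ^ 2) • (1 : Matrix (Fin n) (Fin n) ℝ)) ∧
    μ + Q *ᵥ (V *ᵥ y) =
      μ + Q *ᵥ ((Aᵀ * R⁻¹ * A * Q + (lam ^ 2) • (1 : Matrix (Fin n) (Fin n) ℝ))⁻¹ *ᵥ
        (Aᵀ *ᵥ (R⁻¹ *ᵥ b))) := by
  have hγ1' : (0:ℝ) ≤ 1 - γ := by linarith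
  -- positive definiteness of Q
  have hQd : Q.PosDef := by
    rw [hQ]
    exact (posDef_smul_of_pos hγ0 hQ1).add_posSemidef (posSemidef_smul_of_nonneg hγ1' hQ2)
  have hQs : Qᵀ = Q := by
    have := hQd.isHermitian.eq
    rwa [conjTranspose_eq_transpose_of_trivial] at this
  have hRinv : (R⁻¹).PosDef := hR.inv
  -- orthonormality of LR * U
  have hUtU : (LR * U)ᵀ * (LR * U) = 1 := by
    rw [transpose_mul, Matrix.mul_assoc, ← Matrix.mul_assoc LRᵀ, ← hLR,
      ← Matrix.mul_assoc, hU]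
  -- decomposition of LR * A * Q * V
  have hYRk : Y * Rk = LR * A * Q₂ * V - LR * U * ((LR * U)ᵀ * (LR * A * Q₂ * V)) := by
    rw [← hQR, Matrix.sub_mul, Matrix.one_mul, Matrix.mul_assoc (LR * U)]
  have hUB : LR * U * B = LR * (A * Q₁ * V) := by
    rw [Matrix.mul_assoc, ← hAQV]
  have hG : LR * U * (γ • B + (1 - γ) • ((LR * U)ᵀ * (LR * A * Q₂ * V))) + Y * ((1 - γ) • Rk)
      = LR * A * Q * V := by
    have h1 : Y * ((1 - γ) • Rk) = (1 - γ) • (LR * A * Q₂ * V) -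
        (1 - γ) • (LR * U * ((LR * U)ᵀ * (LR * A * Q₂ * V))) := by
      rw [Matrix.mul_smul, hYRk, smul_sub]
    have h2 : LR * U * (γ • B + (1 - γ) • ((LR * U)ᵀ * (LR * A * Q₂ * V)))
        = γ • (LR * (A * Q₁ * V)) + (1 - γ) • (LR * U * ((LR * U)ᵀ * (LR * A * Q₂ * V))) := by
      rw [Matrix.mul_add, Matrix.mul_smul, hUB, Matrix.mul_smul]
    have h3 : LR * A * Q * V = γ • (LR * (A * Q₁ * V)) + (1 - γ) • (LR * A * Q₂ * V) := by
      rw [hQ]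
      simp only [Matrix.mul_add, Matrix.add_mul, Matrix.smul_mul, Matrix.mul_smul,
        Matrix.mul_assoc]
    rw [h1, h2, h3]
    simp only [Matrix.mul_assoc]
    abel
  -- D^T D in terms of the full matrix
  have hDtD : Dᵀ * D = Vᵀ * (Q * (Aᵀ * (R⁻¹ * (A * (Q * V))))) := by
    rw [hD, transpose_fromRows, fromCols_mul_fromRows,
      ← aux_orth_mul (LR * U) Y _ _ hUtU hUY hY, hG, hLR]
    simp only [Matrix.transpose_mul, Matrix.mul_assoc, hQs]
  -- V^T Q V
  have hVQV : Vᵀ * Q * V = γ • (1 : Matrix (Fin n) (Fin n) ℝ) + (1 - γ) • (Vᵀ * Q₂ * V) := by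
    rw [hQ]
    simp only [Matrix.mul_add, Matrix.add_mul, Matrix.mul_smul, Matrix.smul_mul, hV]
  -- the matrix P
  have hMeq : M = Vᵀ * ((Q * (Aᵀ * (R⁻¹ * (A * Q))) + lam ^ 2 • Q) * V) := by
    rw [hM, hDtD]
    have hsc : (lam ^ 2 * γ) • (1 : Matrix (Fin n) (Fin n) ℝ)
        + (lam ^ 2 * (1 - γ)) • (Vᵀ * Q₂ * V) = lam ^ 2 • (Vᵀ * Q * V) := by
      rw [hVQV, smul_add, smul_smul, smul_smul]
    rw [add_assoc, hsc]
    simp only [Matrix.add_mul, Matrix.mul_add, Matrix.smul_mul, Matrix.mul_smul,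
      Matrix.mul_assoc]
  have hlam2 : (0:ℝ) < lam ^ 2 := by positivity
  have hps : (Q * (Aᵀ * (R⁻¹ * (A * Q)))).PosSemidef := by
    have h := hRinv.posSemidef.conjTranspose_mul_mul_same (A * Q)
    rw [conjTranspose_eq_transpose_of_trivial] at h
    simpa only [Matrix.transpose_mul, hQs, Matrix.mul_assoc] using h
  have hPd : (Q * (Aᵀ * (R⁻¹ * (A * Q))) + lam ^ 2 • Q).PosDef :=
    Matrix.PosDef.posSemidef_add hps (posDef_smul_of_pos hlam2 hQd)
  have hPdet : IsUnit (Q * (Aᵀ * (R⁻¹ * (A * Q))) + lam ^ 2 • Q).det :=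
    hPd.det_pos.ne'.isUnit
  have hQdet : IsUnit Q.det := hQd.det_pos.ne'.isUnit
  -- V is invertible
  have hVdet : IsUnit V.det := by
    have h := congrArg Matrix.det hV
    rw [Matrix.det_mul, Matrix.det_mul, Matrix.det_transpose, Matrix.det_one] at h
    exact IsUnit.of_mul_eq_one (a := V.det) (Q₁.det * V.det) (by linear_combination h)
  have hVtdet : IsUnit (Vᵀ).det := by rwa [Matrix.det_transpose]
  have hMu : IsUnit M := by
    rw [Matrix.isUnit_iff_isUnit_det, hMeq, Matrix.det_mul, Matrix.det_mul,
      Matrix.det_transpose]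
    exact hVdet.mul (hPdet.mul hVdet)
  -- Q * N = P
  have hQN : Q * (Aᵀ * R⁻¹ * A * Q + lam ^ 2 • (1 : Matrix (Fin n) (Fin n) ℝ))
      = Q * (Aᵀ * (R⁻¹ * (A * Q))) + lam ^ 2 • Q := by
    simp only [Matrix.mul_add, Matrix.mul_smul, Matrix.mul_one, Matrix.mul_assoc]
  have hNdet : IsUnit (Aᵀ * R⁻¹ * A * Q + lam ^ 2 • (1 : Matrix (Fin n) (Fin n) ℝ)).det := by
    have h := congrArg Matrix.det hQN
    rw [Matrix.det_mul] at h
    exact (IsUnit.mul_iff.mp (h ▸ hPdet)).2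
  have hNu : IsUnit (Aᵀ * R⁻¹ * A * Q + lam ^ 2 • (1 : Matrix (Fin n) (Fin n) ℝ)) :=
    (Matrix.isUnit_iff_isUnit_det _).mpr hNdet
  refine ⟨hMu, hNu, ?_⟩
  -- compute D^T c
  have hTt : (γ • B + (1 - γ) • ((LR * U)ᵀ * (LR * A * Q₂ * V)))ᵀ
      = (LR * A * Q * V)ᵀ * (LR * U) := by
    rw [← hG]
    exact (aux_orth_proj (LR * U) Y _ _ hUtU hUY).symm
  have hDc : Dᵀ *ᵥ c = (Vᵀ * (Q * (Aᵀ * R⁻¹))) *ᵥ b := by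
    rw [hD, hc, transpose_fromRows, fromCols_mulVec_sumElim, Matrix.mulVec_zero,
      add_zero, hTt, ← Matrix.mulVec_mulVec, ← Matrix.mulVec_mulVec, hb,
      Matrix.mulVec_mulVec]

    rw [hLR]
    simp only [Matrix.transpose_mul, Matrix.mul_assoc, hQs]
  have hMinv : V * M⁻¹ * Vᵀ = (Q * (Aᵀ * (R⁻¹ * (A * Q))) + lam ^ 2 • Q)⁻¹ := by
    rw [hMeq, Matrix.mul_inv_rev, Matrix.mul_inv_rev]
    simp only [Matrix.mul_assoc]
    rw [Matrix.nonsing_inv_mul _ hVtdet, Matrix.mul_one, ← Matrix.mul_assoc,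
      Matrix.mul_nonsing_inv _ hVdet, Matrix.one_mul]
  have hPinvQ : (Q * (Aᵀ * (R⁻¹ * (A * Q))) + lam ^ 2 • Q)⁻¹ * Q
      = (Aᵀ * R⁻¹ * A * Q + lam ^ 2 • (1 : Matrix (Fin n) (Fin n) ℝ))⁻¹ := by
    rw [← hQN, Matrix.mul_inv_rev, Matrix.mul_assoc, Matrix.nonsing_inv_mul _ hQdet,
      Matrix.mul_one]
  have hmat : V * M⁻¹ * (Vᵀ * (Q * (Aᵀ * R⁻¹)))
      = (Aᵀ * R⁻¹ * A * Q + lam ^ 2 • (1 : Matrix (Fin n) (Fin n) ℝ))⁻¹ * Aᵀ * R⁻¹ := by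
    calc V * M⁻¹ * (Vᵀ * (Q * (Aᵀ * R⁻¹)))
        = (V * M⁻¹ * Vᵀ) * Q * (Aᵀ * R⁻¹) := by simp only [Matrix.mul_assoc]
      _ = ((Q * (Aᵀ * (R⁻¹ * (A * Q))) + lam ^ 2 • Q)⁻¹ * Q) * (Aᵀ * R⁻¹) := by rw [hMinv]
      _ = _ := by rw [hPinvQ, ← Matrix.mul_assoc]
  have hkey : V *ᵥ y = (Aᵀ * R⁻¹ * A * Q + lam ^ 2 • (1 : Matrix (Fin n) (Fin n) ℝ))⁻¹ *ᵥ
      (Aᵀ *ᵥ (R⁻¹ *ᵥ b)) := by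
    rw [hy, hDc, Matrix.mulVec_mulVec, Matrix.mulVec_mulVec, hmat, Matrix.mulVec_mulVec,
      Matrix.mulVec_mulVec]
  rw [hkey]
end

section
/- Let A ∈ ℝ^{m×n}, let R ∈ ℝ^{m×m} and Q ∈ ℝ^{n×n} be symmetric positive definite, let λ > 0, let b ∈ ℝ^m, and let V_n ∈ ℝ^{n×n} be invertible. Then the matrices V_nᵀQᵀAᵀR⁻¹AQV_n + λ²V_nᵀQV_n and AᵀR⁻¹AQ + λ²I_n are invertible, and Q V_n (V_nᵀQᵀAᵀR⁻¹AQV_n + λ²V_nᵀQV_n)⁻¹ V_nᵀQᵀAᵀR⁻¹ b = Q (AᵀR⁻¹AQ + λ²I_n)⁻¹ AᵀR⁻¹ b. -/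
open Matrix

lemma smul_posDef_aux {n : ℕ} {c : ℝ} (hc : 0 < c) {M : Matrix (Fin n) (Fin n) ℝ}
    (hM : M.PosDef) : (c • M).PosDef := by
  constructor
  · show (c • M)ᴴ = c • M
    rw [Matrix.conjTranspose_smul, hM.1.eq, star_trivial]
  · intro x hx
    have := hM.2 hx
    convert mul_pos hc this using 1
    simp only [Finsupp.sum, Finset.mul_sum, Matrix.smul_apply, smul_eq_mul]
    refine Finset.sum_congr rfl fun i _ => Finset.sum_congr rfl fun j _ => by ring

theorem stmt_11 {m n : ℕ} (A : Matrix (Fin m) (Fin n) ℝ)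
    (R : Matrix (Fin m) (Fin m) ℝ) (Q : Matrix (Fin n) (Fin n) ℝ)
    (hR : R.PosDef) (hQ : Q.PosDef) (lam : ℝ) (hlam : 0 < lam)
    (b : Fin m → ℝ) (Vn : Matrix (Fin n) (Fin n) ℝ) (hVn : IsUnit Vn) :
    IsUnit (Vnᵀ * Qᵀ * Aᵀ * R⁻¹ * A * Q * Vn + (lam ^ 2) • (Vnᵀ * Q * Vn)) ∧
    IsUnit (Aᵀ * R⁻¹ * A * Q + (lam ^ 2) • (1 : Matrix (Fin n) (Fin n) ℝ)) ∧
    Q *ᵥ (Vn *ᵥ ((Vnᵀ * Qᵀ * Aᵀ * R⁻¹ * A * Q * Vn + (lam ^ 2) • (Vnᵀ * Q * Vn))⁻¹ *ᵥ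
        (Vnᵀ *ᵥ (Qᵀ *ᵥ (Aᵀ *ᵥ (R⁻¹ *ᵥ b)))))) =
      Q *ᵥ ((Aᵀ * R⁻¹ * A * Q + (lam ^ 2) • (1 : Matrix (Fin n) (Fin n) ℝ))⁻¹ *ᵥ
        (Aᵀ *ᵥ (R⁻¹ *ᵥ b))) := by
  have hQt : Qᵀ = Q := hQ.1
  have hQu : IsUnit Q := hQ.isUnit
  have hQd : IsUnit Q.det := (Matrix.isUnit_iff_isUnit_det Q).mp hQu
  have hVnd : IsUnit Vn.det := (Matrix.isUnit_iff_isUnit_det Vn).mp hVn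
  have hVnTd : IsUnit Vnᵀ.det := by rwa [Matrix.det_transpose]
  have hVnT : IsUnit Vnᵀ := (Matrix.isUnit_iff_isUnit_det Vnᵀ).mpr hVnTd
  have hQinv : Q⁻¹.PosDef := hQ.inv
  have hRinv : R⁻¹.PosDef := hR.inv
  have hsemi : (Aᵀ * R⁻¹ * A).PosSemidef := by
    have := hRinv.posSemidef.conjTranspose_mul_mul_same A
    simpa [Matrix.conjTranspose_eq_transpose_of_trivial, Matrix.mul_assoc] using this
  have hS : (Aᵀ * R⁻¹ * A + (lam ^ 2) • Q⁻¹).PosDef :=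
    Matrix.PosDef.posSemidef_add hsemi (smul_posDef_aux (by positivity) hQinv)
  set M : Matrix (Fin n) (Fin n) ℝ :=
    Aᵀ * R⁻¹ * A * Q + (lam ^ 2) • (1 : Matrix (Fin n) (Fin n) ℝ) with hMdef
  have hMeq : M = (Aᵀ * R⁻¹ * A + (lam ^ 2) • Q⁻¹) * Q := by
    rw [hMdef, Matrix.add_mul, Matrix.smul_mul, Matrix.nonsing_inv_mul _ hQd]
  have hMu : IsUnit M := by rw [hMeq]; exact hS.isUnit.mul hQu
  have hMd : IsUnit M.det := (Matrix.isUnit_iff_isUnit_det M).mp hMu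
  set N : Matrix (Fin n) (Fin n) ℝ :=
    Vnᵀ * Qᵀ * Aᵀ * R⁻¹ * A * Q * Vn + (lam ^ 2) • (Vnᵀ * Q * Vn) with hNdef
  have hNeq : N = Vnᵀ * (Q * M) * Vn := by
    rw [hNdef, hMdef, hQt]
    simp only [Matrix.mul_add, Matrix.add_mul, Matrix.mul_smul, Matrix.smul_mul,
      Matrix.mul_one, Matrix.mul_assoc]
  have hNu : IsUnit N := by
    rw [hNeq]; exact (hVnT.mul (hQu.mul hMu)).mul hVn
  refine ⟨hNu, hMu, ?_⟩
  have hNinv : N⁻¹ = Vn⁻¹ * (M⁻¹ * (Q⁻¹ * (Vnᵀ)⁻¹)) := by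
    rw [hNeq, Matrix.mul_inv_rev, Matrix.mul_inv_rev, Matrix.mul_inv_rev, Matrix.mul_assoc]
  have key2 : Vn * (N⁻¹ * (Vnᵀ * Qᵀ)) = M⁻¹ := by
    rw [hNinv, hQt]
    simp only [Matrix.mul_assoc]
    rw [Matrix.nonsing_inv_mul_cancel_left _ _ hVnTd,
      Matrix.nonsing_inv_mul _ hQd, Matrix.mul_one,
      Matrix.mul_nonsing_inv_cancel_left _ _ hVnd]
  calc Q *ᵥ (Vn *ᵥ (N⁻¹ *ᵥ (Vnᵀ *ᵥ (Qᵀ *ᵥ (Aᵀ *ᵥ (R⁻¹ *ᵥ b))))))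
      = (Q * (Vn * (N⁻¹ * (Vnᵀ * Qᵀ)))) *ᵥ (Aᵀ *ᵥ (R⁻¹ *ᵥ b)) := by
        simp only [← Matrix.mulVec_mulVec, Matrix.mul_assoc]
    _ = Q *ᵥ (M⁻¹ *ᵥ (Aᵀ *ᵥ (R⁻¹ *ᵥ b))) := by
        rw [key2]; simp only [← Matrix.mulVec_mulVec]
end

section
/- Assume the mixGK setup, let λ > 0, and set C_k(γ,λ) = (D_k(γ)ᵀD_k(γ) + λ²γI_k + λ²(1−γ)V_kᵀQ₂V_k)⁻¹ D_k(γ)ᵀ. Then the matrix D_k(γ)ᵀD_k(γ) + λ²γI_k + λ²(1−γ)V_kᵀQ₂V_k is invertible and tr(D_k(γ)C_k(γ,λ)) = tr((L_R A Q V_k)((L_R A Q V_k)ᵀ(L_R A Q V_k) + λ²V_kᵀQV_k)⁻¹(L_R A Q V_k)ᵀ), where Q = γQ₁ + (1−γ)Q₂. -/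
open Matrix

lemma psd_smul_real {k : Type*} [Fintype k] {s : ℝ} (hs : 0 ≤ s) {P : Matrix k k ℝ}
    (hP : P.PosSemidef) : (s • P).PosSemidef := by
  refine ⟨?_, fun x => ?_⟩
  · unfold Matrix.IsHermitian
    rw [conjTranspose_smul, hP.1.eq]
    simp
  · have e : (x.sum fun i xi => x.sum fun j xj => star xi * (s • P) i j * xj) =
        s * (x.sum fun i xi => x.sum fun j xj => star xi * P i j * xj) := by
      simp only [Finsupp.sum, Finset.mul_sum, Matrix.smul_apply, smul_eq_mul]
      exact Finset.sum_congr rfl fun i _ => Finset.sum_congr rfl fun j _ => by ring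
    rw [e]
    exact mul_nonneg hs (hP.2 x)

lemma pd_smul_real {k : Type*} [Fintype k] {s : ℝ} (hs : 0 < s) {P : Matrix k k ℝ}
    (hP : P.PosDef) : (s • P).PosDef := by
  refine ⟨?_, fun x hx => ?_⟩
  · unfold Matrix.IsHermitian
    rw [conjTranspose_smul, hP.1.eq]
    simp
  · have e : (x.sum fun i xi => x.sum fun j xj => star xi * (s • P) i j * xj) =
        s * (x.sum fun i xi => x.sum fun j xj => star xi * P i j * xj) := by
      simp only [Finsupp.sum, Finset.mul_sum, Matrix.smul_apply, smul_eq_mul]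
      exact Finset.sum_congr rfl fun i _ => Finset.sum_congr rfl fun j _ => by ring
    rw [e]
    exact mul_pos hs (hP.2 hx)

lemma psd_tmul_real {k l : Type*} [Fintype k] [Fintype l] (P : Matrix l k ℝ) :
    (Pᵀ * P).PosSemidef := by
  rw [← conjTranspose_eq_transpose_of_trivial]
  exact posSemidef_conjTranspose_mul_self P

lemma GtG_abstract {a b c : Type*} [Fintype a] [Fintype b] [Fintype c] [DecidableEq b]
    [DecidableEq c]
    (Ut : Matrix a b ℝ) (Y : Matrix a c ℝ) (T : Matrix b c ℝ) (S : Matrix c c ℝ)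
    (hUU : Utᵀ * Ut = 1) (hUY : Utᵀ * Y = 0) (hY : Yᵀ * Y = 1) :
    (Ut * T + Y * S)ᵀ * (Ut * T + Y * S) = Tᵀ * T + Sᵀ * S := by
  have hYU : Yᵀ * Ut = 0 := by
    have := congrArg Matrix.transpose hUY
    simpa using this
  rw [transpose_add, transpose_mul, transpose_mul, Matrix.add_mul, Matrix.mul_add,
    Matrix.mul_add]
  have e1 : Tᵀ * Utᵀ * (Ut * T) = Tᵀ * T := by
    rw [Matrix.mul_assoc, ← Matrix.mul_assoc Utᵀ Ut T, hUU, Matrix.one_mul]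
  have e2 : Tᵀ * Utᵀ * (Y * S) = 0 := by
    rw [Matrix.mul_assoc, ← Matrix.mul_assoc Utᵀ Y S, hUY, Matrix.zero_mul, Matrix.mul_zero]
  have e3 : Sᵀ * Yᵀ * (Ut * T) = 0 := by
    rw [Matrix.mul_assoc, ← Matrix.mul_assoc Yᵀ Ut T, hYU, Matrix.zero_mul, Matrix.mul_zero]
  have e4 : Sᵀ * Yᵀ * (Y * S) = Sᵀ * S := by
    rw [Matrix.mul_assoc, ← Matrix.mul_assoc Yᵀ Y S, hY, Matrix.one_mul]
  rw [e1, e2, e3, e4, add_zero, zero_add]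

theorem stmt_12 {m n k : ℕ}
    (A : Matrix (Fin m) (Fin n) ℝ) (R LR : Matrix (Fin m) (Fin m) ℝ)
    (Q₁ Q₂ : Matrix (Fin n) (Fin n) ℝ) (b : Fin m → ℝ) (β₁ γ : ℝ)
    (U : Matrix (Fin m) (Fin (k + 1)) ℝ) (V : Matrix (Fin n) (Fin k) ℝ)
    (B : Matrix (Fin (k + 1)) (Fin k) ℝ)
    (Y : Matrix (Fin m) (Fin k) ℝ) (Rk : Matrix (Fin k) (Fin k) ℝ)
    (hR : R.PosDef) (hLR : R⁻¹ = LRᵀ * LR)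
    (hQ1 : Q₁.PosDef) (hQ2 : Q₂.PosSemidef)
    (hγ0 : 0 < γ) (hγ1 : γ ≤ 1) (hβ : 0 < β₁)
    (hb : U *ᵥ (β₁ • (Pi.single 0 1 : Fin (k + 1) → ℝ)) = b)
    (hAQV : A * Q₁ * V = U * B)
    (hU : Uᵀ * R⁻¹ * U = 1) (hV : Vᵀ * Q₁ * V = 1)
    (hY : Yᵀ * Y = 1) (hUY : (LR * U)ᵀ * Y = 0)
    (hRtri : Rk.BlockTriangular id)
    (hQR : ((1 : Matrix (Fin m) (Fin m) ℝ) - (LR * U) * (LR * U)ᵀ) * (LR * A * Q₂ * V) = Y * Rk)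
    (Q : Matrix (Fin n) (Fin n) ℝ) (hQ : Q = γ • Q₁ + (1 - γ) • Q₂)
    (D : Matrix (Fin (k + 1) ⊕ Fin k) (Fin k) ℝ)
    (hD : D = fromRows (γ • B + (1 - γ) • ((LR * U)ᵀ * (LR * A * Q₂ * V))) ((1 - γ) • Rk))
    (c : Fin (k + 1) ⊕ Fin k → ℝ) (hc : c = Sum.elim (β₁ • (Pi.single 0 1 : Fin (k + 1) → ℝ)) (0 : Fin k → ℝ))
    (lam : ℝ) (hlam : 0 < lam)
    (M : Matrix (Fin k) (Fin k) ℝ)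
    (hM : M = Dᵀ * D + (lam ^ 2 * γ) • (1 : Matrix (Fin k) (Fin k) ℝ)
        + (lam ^ 2 * (1 - γ)) • (Vᵀ * Q₂ * V))
    (C : Matrix (Fin k) (Fin (k + 1) ⊕ Fin k) ℝ) (hC : C = M⁻¹ * Dᵀ) :
    IsUnit M ∧
    (D * C).trace =
      ((LR * A * Q * V) *
        (((LR * A * Q * V)ᵀ * (LR * A * Q * V) + (lam ^ 2) • (Vᵀ * Q * V))⁻¹) *
        (LR * A * Q * V)ᵀ).trace := by
  obtain ⟨Ut, hUt⟩ : ∃ X, X = LR * U := ⟨_, rfl⟩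
  obtain ⟨T, hT⟩ : ∃ X, X = γ • B + (1 - γ) • (Utᵀ * (LR * A * Q₂ * V)) := ⟨_, rfl⟩
  obtain ⟨S, hS⟩ : ∃ X, X = (1 - γ) • Rk := ⟨_, rfl⟩
  obtain ⟨G, hG⟩ : ∃ X, X = LR * A * Q * V := ⟨_, rfl⟩
  have hUU : Utᵀ * Ut = 1 := by
    have h1 : Utᵀ * Ut = Uᵀ * R⁻¹ * U := by
      rw [hUt, transpose_mul, hLR]
      simp only [Matrix.mul_assoc]
    rw [h1, hU]
  have hUY' : Utᵀ * Y = 0 := by rw [hUt]; exact hUY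
  -- decomposition of LR*A*Q₂*V
  have hX : LR * A * Q₂ * V = Ut * (Utᵀ * (LR * A * Q₂ * V)) + Y * Rk := by
    have h := hQR
    rw [Matrix.sub_mul, Matrix.one_mul, ← hUt] at h
    rw [← Matrix.mul_assoc]
    exact (sub_eq_iff_eq_add.mp h).trans (add_comm _ _)
  have hGsplit : G = γ • (LR * A * Q₁ * V) + (1 - γ) • (LR * A * Q₂ * V) := by
    rw [hG, hQ, Matrix.mul_add, Matrix.add_mul, Matrix.mul_smul, Matrix.smul_mul,
      Matrix.mul_smul, Matrix.smul_mul]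
  have h1 : LR * A * Q₁ * V = Ut * B := by
    rw [hUt, Matrix.mul_assoc, Matrix.mul_assoc, ← Matrix.mul_assoc A Q₁ V, hAQV,
      ← Matrix.mul_assoc]
  have h2 : Ut * T + Y * S = γ • (Ut * B) + (1 - γ) • (LR * A * Q₂ * V) := by
    rw [hT, hS, Matrix.mul_add, Matrix.mul_smul, Matrix.mul_smul, Matrix.mul_smul,
      add_assoc, ← smul_add, ← hX]
  have hGdec : G = Ut * T + Y * S := by rw [hGsplit, h1, ← h2]
  have hGtG : Gᵀ * G = Tᵀ * T + Sᵀ * S := by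
    rw [hGdec]
    exact GtG_abstract Ut Y T S hUU hUY' hY
  have hDtD : Dᵀ * D = Tᵀ * T + Sᵀ * S := by
    rw [hD, ← hUt, ← hT, ← hS, transpose_fromRows, fromCols_mul_fromRows]
  have hVQV : Vᵀ * Q * V = γ • (1 : Matrix (Fin k) (Fin k) ℝ) + (1 - γ) • (Vᵀ * Q₂ * V) := by
    rw [hQ, Matrix.mul_add, Matrix.add_mul, Matrix.mul_smul, Matrix.smul_mul,
      Matrix.mul_smul, Matrix.smul_mul, hV]
  have hMeq : M = Gᵀ * G + lam ^ 2 • (Vᵀ * Q * V) := by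
    rw [hM, hDtD, hGtG, hVQV, smul_add, smul_smul, smul_smul, add_assoc]
  have hpsdQ2V : (Vᵀ * Q₂ * V).PosSemidef := by
    have h3 := hQ2.conjTranspose_mul_mul_same V
    rwa [conjTranspose_eq_transpose_of_trivial] at h3
  have hMpd : M.PosDef := by
    rw [hM]
    have hpd1 : (Dᵀ * D + (lam ^ 2 * γ) • (1 : Matrix (Fin k) (Fin k) ℝ)).PosDef :=
      Matrix.PosDef.posSemidef_add (psd_tmul_real D)
        (pd_smul_real (by positivity) Matrix.PosDef.one)
    exact hpd1.add_posSemidef (psd_smul_real (by nlinarith) hpsdQ2V)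
  refine ⟨hMpd.isUnit, ?_⟩
  rw [hC, ← hG, ← hMeq, ← Matrix.mul_assoc]
  rw [Matrix.trace_mul_cycle D M⁻¹ Dᵀ, Matrix.trace_mul_cycle G M⁻¹ Gᵀ]
  rw [hGtG, hDtD]
end

section
/- (Lemma 3.2 at k = n) Assume the mixGK setup with k = n, so that V_n ∈ ℝ^{n×n} is invertible, and let λ > 0. Set C_n(γ,λ) = (D_n(γ)ᵀD_n(γ) + λ²γI_n + λ²(1−γ)V_nᵀQ₂V_n)⁻¹ D_n(γ)ᵀ, y_n(γ,λ) = C_n(γ,λ)c, x(γ,λ) = (AᵀR⁻¹AQ + λ²I_n)⁻¹AᵀR⁻¹b, and define the projected residual r_proj(γ,λ) = D_n(γ)y_n(γ,λ) − c, the full residual r_full(γ,λ) = L_R A Q x(γ,λ) − L_R b, and the full influence matrix A(γ,λ) = L_R A Q (QᵀAᵀR⁻¹AQ + λ²Q)⁻¹ QᵀAᵀL_Rᵀ. Then ‖r_proj(γ,λ)‖₂ = ‖r_full(γ,λ)‖₂ and tr(D_n(γ)C_n(γ,λ)) = tr(A(γ,λ)). -/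
open Matrix

lemma posDef_smul' {k : ℕ} {c : ℝ} {M : Matrix (Fin k) (Fin k) ℝ} (hM : M.PosDef) (hc : 0 < c) :
    (c • M).PosDef := by
  refine ⟨?_, fun x hx => ?_⟩
  · unfold Matrix.IsHermitian
    rw [conjTranspose_smul, hM.1.eq, star_trivial]
  · exact (hM.smul hc).2 hx

lemma posSemidef_smul' {k : ℕ} {c : ℝ} {M : Matrix (Fin k) (Fin k) ℝ} (hM : M.PosSemidef) (hc : 0 ≤ c) :
    (c • M).PosSemidef := by
  refine ⟨?_, fun x => ?_⟩
  · unfold Matrix.IsHermitian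
    rw [conjTranspose_smul, hM.1.eq, star_trivial]
  · exact (hM.smul hc).2 x

theorem stmt_14 {m n : ℕ}
    (A : Matrix (Fin m) (Fin n) ℝ) (R LR : Matrix (Fin m) (Fin m) ℝ)
    (Q₁ Q₂ : Matrix (Fin n) (Fin n) ℝ) (b : Fin m → ℝ) (β₁ γ : ℝ)
    (U : Matrix (Fin m) (Fin (n + 1)) ℝ) (V : Matrix (Fin n) (Fin n) ℝ)
    (B : Matrix (Fin (n + 1)) (Fin n) ℝ)
    (Y : Matrix (Fin m) (Fin n) ℝ) (Rk : Matrix (Fin n) (Fin n) ℝ)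
    (hR : R.PosDef) (hLR : R⁻¹ = LRᵀ * LR)
    (hQ1 : Q₁.PosDef) (hQ2 : Q₂.PosSemidef)
    (hγ0 : 0 < γ) (hγ1 : γ ≤ 1) (hβ : 0 < β₁)
    (hb : U *ᵥ (β₁ • (Pi.single 0 1 : Fin (n + 1) → ℝ)) = b)
    (hAQV : A * Q₁ * V = U * B)
    (hU : Uᵀ * R⁻¹ * U = 1) (hV : Vᵀ * Q₁ * V = 1)
    (hY : Yᵀ * Y = 1) (hUY : (LR * U)ᵀ * Y = 0)
    (hRtri : Rk.BlockTriangular id)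
    (hQR : ((1 : Matrix (Fin m) (Fin m) ℝ) - (LR * U) * (LR * U)ᵀ) * (LR * A * Q₂ * V) = Y * Rk)
    (Q : Matrix (Fin n) (Fin n) ℝ) (hQ : Q = γ • Q₁ + (1 - γ) • Q₂)
    (D : Matrix (Fin (n + 1) ⊕ Fin n) (Fin n) ℝ)
    (hD : D = fromRows (γ • B + (1 - γ) • ((LR * U)ᵀ * (LR * A * Q₂ * V))) ((1 - γ) • Rk))
    (c : Fin (n + 1) ⊕ Fin n → ℝ) (hc : c = Sum.elim (β₁ • (Pi.single 0 1 : Fin (n + 1) → ℝ)) (0 : Fin n → ℝ))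
    (lam : ℝ) (hlam : 0 < lam)
    (M : Matrix (Fin n) (Fin n) ℝ)
    (hM : M = Dᵀ * D + (lam ^ 2 * γ) • (1 : Matrix (Fin n) (Fin n) ℝ)
        + (lam ^ 2 * (1 - γ)) • (Vᵀ * Q₂ * V))
    (C : Matrix (Fin n) (Fin (n + 1) ⊕ Fin n) ℝ) (hC : C = M⁻¹ * Dᵀ)
    (y : Fin n → ℝ) (hy : y = C *ᵥ c)
    (x : Fin n → ℝ)
    (hx : x = (Aᵀ * R⁻¹ * A * Q + (lam ^ 2) • (1 : Matrix (Fin n) (Fin n) ℝ))⁻¹ *ᵥ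
        (Aᵀ *ᵥ (R⁻¹ *ᵥ b)))
    (Afull : Matrix (Fin m) (Fin m) ℝ)
    (hAfull : Afull = LR * A * Q * (Qᵀ * Aᵀ * R⁻¹ * A * Q + (lam ^ 2) • Q)⁻¹ * Qᵀ * Aᵀ * LRᵀ) :
    l2norm (D *ᵥ y - c) = l2norm ((LR * A * Q) *ᵥ x - LR *ᵥ b) ∧
    (D * C).trace = Afull.trace := by
  -- basic symmetry facts
  have hQ1t : Q₁ᵀ = Q₁ := by
    rw [← conjTranspose_eq_transpose_of_trivial]; exact hQ1.1.eq
  have hQ2t : Q₂ᵀ = Q₂ := by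
    rw [← conjTranspose_eq_transpose_of_trivial]; exact hQ2.1.eq
  have hQt : Qᵀ = Q := by
    rw [hQ, transpose_add, transpose_smul, transpose_smul, hQ1t, hQ2t]
  -- Q is positive definite
  have hγ1' : (0:ℝ) ≤ 1 - γ := by linarith
  have hQpd : Q.PosDef := by
    rw [hQ]
    exact (posDef_smul' hQ1 hγ0).add_posSemidef (posSemidef_smul' hQ2 hγ1')
  have hQdet : IsUnit Q.det := hQpd.det_pos.ne'.isUnit
  -- V is invertible
  have hVdet : IsUnit V.det := by
    have h1 : (Vᵀ * Q₁ * V).det = 1 := by rw [hV, det_one]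
    rw [det_mul, det_mul, det_transpose, mul_assoc] at h1
    exact isUnit_of_mul_isUnit_left (by rw [h1]; exact isUnit_one)
  have hVtdet : IsUnit Vᵀ.det := V.isUnit_det_transpose hVdet
  -- abbreviations
  set Ut : Matrix (Fin m) (Fin (n+1)) ℝ := LR * U with hUt
  set F : Matrix (Fin m) (Fin n) ℝ := LR * A * Q₂ * V with hF
  set W : Matrix (Fin m) (Fin (n+1) ⊕ Fin n) ℝ := fromCols Ut Y with hW
  -- orthonormality of W
  have hUtUt : Utᵀ * Ut = 1 := by
    rw [hUt, transpose_mul, Matrix.mul_assoc, ← Matrix.mul_assoc LRᵀ LR U, ← hLR,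
      ← Matrix.mul_assoc, hU]
  have hWtW : Wᵀ * W = 1 := by
    rw [hW, transpose_fromCols, fromRows_mul_fromCols, hUtUt, hY]
    have hYUt : Yᵀ * Ut = 0 := by
      have := congrArg Matrix.transpose hUY
      rwa [transpose_mul, transpose_transpose, transpose_zero] at this
    rw [hUY, hYUt, fromBlocks_one]
  -- W * D = LR * A * Q * V
  have hUtB : Ut * B = LR * A * Q₁ * V := by
    rw [hUt, Matrix.mul_assoc, ← hAQV, ← Matrix.mul_assoc, ← Matrix.mul_assoc]
  have hYRk : Y * Rk = F - Ut * (Utᵀ * F) := by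
    rw [← hQR, Matrix.sub_mul, Matrix.one_mul, Matrix.mul_assoc]
  have hWD : W * D = LR * A * Q * V := by
    rw [hW, hD, fromCols_mul_fromRows, Matrix.mul_add, Matrix.mul_smul, Matrix.mul_smul,
      Matrix.mul_smul, hYRk, hUtB, ← Matrix.mul_assoc Ut Utᵀ F, hQ]
    have : LR * A * (γ • Q₁ + (1 - γ) • Q₂) * V
        = γ • (LR * A * Q₁ * V) + (1 - γ) • F := by
      rw [Matrix.mul_add, Matrix.add_mul, Matrix.mul_smul, Matrix.mul_smul,
        Matrix.smul_mul, Matrix.smul_mul, hF]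
    rw [this]
    module
  -- W *ᵥ c = LR *ᵥ b
  have hWc : W *ᵥ c = LR *ᵥ b := by
    rw [hW, hc, fromCols_mulVec_sumElim, mulVec_zero, add_zero, hUt,
      ← mulVec_mulVec, hb]
  -- key inner products
  have hWtWD : Wᵀ * (W * D) = D := by
    rw [← Matrix.mul_assoc, hWtW, Matrix.one_mul]
  have hDtD : Dᵀ * D = Vᵀ * (Q * Aᵀ * R⁻¹ * A * Q) * V := by
    have h1 : Dᵀ * D = (W * D)ᵀ * (W * D) := by
      rw [transpose_mul, Matrix.mul_assoc, hWtWD]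
    rw [h1, hWD]
    simp only [transpose_mul, hQt, Matrix.mul_assoc]
    rw [← Matrix.mul_assoc LRᵀ LR, ← hLR]
  have hDtc : Dᵀ *ᵥ c = Vᵀ *ᵥ ((Q * Aᵀ * R⁻¹) *ᵥ b) := by
    have h1 : Dᵀ *ᵥ c = (W * D)ᵀ *ᵥ (W *ᵥ c) := by
      rw [transpose_mul, mulVec_mulVec, Matrix.mul_assoc, hWtW, Matrix.mul_one]
    rw [h1, hWD, hWc]
    simp only [transpose_mul, hQt, mulVec_mulVec]
    simp only [Matrix.mul_assoc]
    rw [← hLR]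
  -- the matrix G
  set G : Matrix (Fin n) (Fin n) ℝ := Q * Aᵀ * R⁻¹ * A * Q + lam ^ 2 • Q with hG
  have hGfact : Q * Aᵀ * R⁻¹ * A * Q = (LR * A * Q)ᵀ * (LR * A * Q) := by
    simp only [transpose_mul, hQt, Matrix.mul_assoc]
    rw [← Matrix.mul_assoc LRᵀ LR, ← hLR]
  have hGpd : G.PosDef := by
    rw [hG]
    refine Matrix.PosDef.posSemidef_add ?_ (posDef_smul' hQpd (by positivity))
    rw [hGfact, ← conjTranspose_eq_transpose_of_trivial]
    exact posSemidef_conjTranspose_mul_self _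
  have hGdet : IsUnit G.det := hGpd.det_pos.ne'.isUnit
  -- M = Vᵀ * G * V
  have hVQV : Vᵀ * Q * V = γ • (1 : Matrix (Fin n) (Fin n) ℝ) + (1 - γ) • (Vᵀ * Q₂ * V) := by
    rw [hQ]
    simp only [Matrix.mul_add, Matrix.add_mul, Matrix.mul_smul, Matrix.smul_mul, hV]
  have hMG : M = Vᵀ * G * V := by
    have e1 : Vᵀ * G * V = Vᵀ * (Q * Aᵀ * R⁻¹ * A * Q) * V + lam ^ 2 • (Vᵀ * Q * V) := by
      rw [hG, Matrix.mul_add, Matrix.add_mul, Matrix.mul_smul, Matrix.smul_mul]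
    rw [hM, hDtD, e1, hVQV]
    module
  -- M⁻¹
  have hMinv : M⁻¹ = V⁻¹ * (G⁻¹ * Vᵀ⁻¹) := by
    apply Matrix.inv_eq_right_inv
    rw [hMG, Matrix.mul_assoc (Vᵀ * G) V (V⁻¹ * (G⁻¹ * Vᵀ⁻¹)),
      Matrix.mul_nonsing_inv_cancel_left V (G⁻¹ * Vᵀ⁻¹) hVdet,
      Matrix.mul_assoc Vᵀ G (G⁻¹ * Vᵀ⁻¹),
      Matrix.mul_nonsing_inv_cancel_left G Vᵀ⁻¹ hGdet,
      Matrix.mul_nonsing_inv _ hVtdet]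
  -- inverse of the full normal operator
  have hZinv : (Aᵀ * R⁻¹ * A * Q + lam ^ 2 • (1 : Matrix (Fin n) (Fin n) ℝ))⁻¹ = G⁻¹ * Q := by
    apply Matrix.inv_eq_right_inv
    have hZ : Aᵀ * R⁻¹ * A * Q + lam ^ 2 • (1 : Matrix (Fin n) (Fin n) ℝ) = Q⁻¹ * G := by
      rw [hG, Matrix.mul_add, Matrix.mul_smul, Matrix.nonsing_inv_mul _ hQdet]
      simp only [Matrix.mul_assoc]
      rw [Matrix.nonsing_inv_mul_cancel_left _ _ hQdet]
    rw [hZ, Matrix.mul_assoc, ← Matrix.mul_assoc G G⁻¹ Q, Matrix.mul_nonsing_inv _ hGdet,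
      Matrix.one_mul, Matrix.nonsing_inv_mul _ hQdet]
  -- x = V *ᵥ y
  have hxy : x = V *ᵥ y := by
    rw [hx, hy, hC, hZinv]
    rw [← mulVec_mulVec c M⁻¹ Dᵀ, mulVec_mulVec (Dᵀ *ᵥ c) V M⁻¹, hMinv, hDtc]
    rw [mulVec_mulVec, mulVec_mulVec]
    rw [Matrix.mul_nonsing_inv_cancel_left V (G⁻¹ * Vᵀ⁻¹) hVdet]
    rw [mulVec_mulVec, Matrix.mul_assoc G⁻¹ Vᵀ⁻¹ Vᵀ, Matrix.nonsing_inv_mul _ hVtdet,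
      Matrix.mul_one]
    simp only [mulVec_mulVec, Matrix.mul_assoc]
  constructor
  · -- norms
    have hiso : ∀ u : Fin (n+1) ⊕ Fin n → ℝ, (W *ᵥ u) ⬝ᵥ (W *ᵥ u) = u ⬝ᵥ u := by
      intro u
      rw [dotProduct_mulVec, ← mulVec_transpose, mulVec_mulVec, hWtW, one_mulVec]
    have hWu : W *ᵥ (D *ᵥ y - c) = (LR * A * Q) *ᵥ x - LR *ᵥ b := by
      rw [mulVec_sub, hWc, mulVec_mulVec, hWD, hxy, mulVec_mulVec]
    rw [← hWu]
    unfold l2norm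
    rw [hiso]
  · -- traces
    have h1 : (D * C).trace = (M⁻¹ * (Dᵀ * D)).trace := by
      rw [hC, ← Matrix.mul_assoc, trace_mul_comm, ← Matrix.mul_assoc, trace_mul_comm]
    set P : Matrix (Fin n) (Fin n) ℝ := Q * Aᵀ * R⁻¹ * A * Q with hP
    have key : ∀ N : Matrix (Fin n) (Fin n) ℝ, (V⁻¹ * (N * V)).trace = N.trace := by
      intro N
      rw [trace_mul_comm, Matrix.mul_nonsing_inv_cancel_right _ _ hVdet]
    have h2 : (D * C).trace = (G⁻¹ * P).trace := by
      rw [h1, hDtD, hMinv]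
      simp only [Matrix.mul_assoc]
      rw [Matrix.nonsing_inv_mul_cancel_left Vᵀ (P * V) hVtdet, ← Matrix.mul_assoc G⁻¹ P V]
      exact key (G⁻¹ * P)
    have h3 : Afull.trace = (G⁻¹ * P).trace := by
      rw [hAfull, hQt, ← hP, ← hG]
      rw [trace_mul_comm]
      rw [show LRᵀ * (LR * A * Q * G⁻¹ * Q * Aᵀ) = (LRᵀ * LR) * (A * Q * G⁻¹ * Q * Aᵀ) by
        simp only [Matrix.mul_assoc]]
      rw [← hLR]
      rw [show R⁻¹ * (A * Q * G⁻¹ * Q * Aᵀ) = (R⁻¹ * A * Q) * (G⁻¹ * (Q * Aᵀ)) by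
        simp only [Matrix.mul_assoc]]
      rw [trace_mul_comm]
      rw [show G⁻¹ * (Q * Aᵀ) * (R⁻¹ * A * Q) = G⁻¹ * P by
        rw [hP]; simp only [Matrix.mul_assoc]]
    rw [h2, h3]
end

section
/- (Theorem 3.3 at k = n) Assume the mixGK setup with k = n, and let σ² ≥ 0. For 0 < γ ≤ 1 and λ > 0 define C_n(γ,λ) = (D_n(γ)ᵀD_n(γ) + λ²γI_n + λ²(1−γ)V_nᵀQ₂V_n)⁻¹ D_n(γ)ᵀ, the projected UPRE function U_proj(γ,λ) = (1/(2n+1))‖D_n(γ)C_n(γ,λ)c − c‖₂² + (2σ²/(2n+1)) tr(D_n(γ)C_n(γ,λ)) − σ², and, with x(γ,λ) = (AᵀR⁻¹AQ + λ²I_n)⁻¹AᵀR⁻¹b and A(γ,λ) = L_R A Q (QᵀAᵀR⁻¹AQ + λ²Q)⁻¹ QᵀAᵀL_Rᵀ, the full UPRE function U_full(γ,λ) = (1/m)‖L_R A Q x(γ,λ) − L_R b‖₂² + (2σ²/m) tr(A(γ,λ)) − σ². Then a pair (γ*,λ*) with 0 < γ* ≤ 1, λ* > 0 satisfies U_proj(γ*,λ*)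 ≤ U_proj(γ,λ) for all 0 < γ ≤ 1, λ > 0 if and only if it satisfies U_full(γ*,λ*) ≤ U_full(γ,λ) for all 0 < γ ≤ 1, λ > 0; i.e., the minimizers of the projected and full UPRE functions coincide at k = n. -/
open Matrix

section Helpers
set_option linter.unusedSectionVars false
variable {k k' : Type*} [Fintype k] [DecidableEq k] [Fintype k'] [DecidableEq k']

lemma myPosDefSmul {M : Matrix k k ℝ} (h : M.PosDef) {a : ℝ} (ha : 0 < a) :
    (a • M).PosDef := by
  refine ⟨?_, fun v hv => ?_⟩
  · have := h.1
    unfold Matrix.IsHermitian at *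
    rw [conjTranspose_smul, this]
    simp
  · exact (h.smul ha).2 hv

lemma myPosSemidefSmul {M : Matrix k k ℝ} (h : M.PosSemidef) {a : ℝ} (ha : 0 ≤ a) :
    (a • M).PosSemidef := by
  refine ⟨?_, fun v => ?_⟩
  · have := h.1
    unfold Matrix.IsHermitian at *
    rw [conjTranspose_smul, this]
    simp
  · exact (h.smul ha).2 v

lemma myPsdTmul (A : Matrix k' k ℝ) : (Aᵀ * A).PosSemidef := by
  have := Matrix.posSemidef_conjTranspose_mul_self A
  rwa [conjTranspose_eq_transpose_of_trivial] at this

lemma myCancel {N : Matrix k k ℝ} (h : IsUnit N.det) {u v : k → ℝ}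
    (huv : N *ᵥ u = N *ᵥ v) : u = v := by
  have := congrArg (fun w => N⁻¹ *ᵥ w) huv
  simpa [Matrix.mulVec_mulVec, Matrix.nonsing_inv_mul N h] using this

end Helpers

theorem stmt_18 {m n : ℕ}
    (A : Matrix (Fin m) (Fin n) ℝ) (R LR : Matrix (Fin m) (Fin m) ℝ)
    (Q₁ Q₂ : Matrix (Fin n) (Fin n) ℝ) (b : Fin m → ℝ) (β₁ : ℝ)
    (U : Matrix (Fin m) (Fin (n + 1)) ℝ) (V : Matrix (Fin n) (Fin n) ℝ)
    (B : Matrix (Fin (n + 1)) (Fin n) ℝ)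
    (Y : Matrix (Fin m) (Fin n) ℝ) (Rk : Matrix (Fin n) (Fin n) ℝ)
    (hR : R.PosDef) (hLR : R⁻¹ = LRᵀ * LR)
    (hQ1 : Q₁.PosDef) (hQ2 : Q₂.PosSemidef) (hβ : 0 < β₁)
    (hb : U *ᵥ (β₁ • (Pi.single 0 1 : Fin (n + 1) → ℝ)) = b)
    (hAQV : A * Q₁ * V = U * B)
    (hU : Uᵀ * R⁻¹ * U = 1) (hV : Vᵀ * Q₁ * V = 1)
    (hY : Yᵀ * Y = 1) (hUY : (LR * U)ᵀ * Y = 0)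
    (hRtri : Rk.BlockTriangular id)
    (hQR : ((1 : Matrix (Fin m) (Fin m) ℝ) - (LR * U) * (LR * U)ᵀ) * (LR * A * Q₂ * V) = Y * Rk)
    (sq : ℝ) (hsq : 0 ≤ sq)
    (c : Fin (n + 1) ⊕ Fin n → ℝ)
    (hc : c = Sum.elim (β₁ • (Pi.single 0 1 : Fin (n + 1) → ℝ)) (0 : Fin n → ℝ))
    (Qf : ℝ → Matrix (Fin n) (Fin n) ℝ) (hQf : ∀ g, Qf g = g • Q₁ + (1 - g) • Q₂)
    (D : ℝ → Matrix (Fin (n + 1) ⊕ Fin n) (Fin n) ℝ)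
    (hD : ∀ g, D g = fromRows (g • B + (1 - g) • ((LR * U)ᵀ * (LR * A * Q₂ * V))) ((1 - g) • Rk))
    (C : ℝ → ℝ → Matrix (Fin n) (Fin (n + 1) ⊕ Fin n) ℝ)
    (hC : ∀ g l, C g l = ((D g)ᵀ * D g + (l ^ 2 * g) • (1 : Matrix (Fin n) (Fin n) ℝ)
        + (l ^ 2 * (1 - g)) • (Vᵀ * Q₂ * V))⁻¹ * (D g)ᵀ)
    (Uproj : ℝ → ℝ → ℝ)
    (hUproj : ∀ g l, Uproj g l =
        (1 / (2 * (n : ℝ) + 1)) *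
          ((D g *ᵥ (C g l *ᵥ c) - c) ⬝ᵥ (D g *ᵥ (C g l *ᵥ c) - c))
        + (2 * sq / (2 * (n : ℝ) + 1)) * (D g * C g l).trace - sq)
    (x : ℝ → ℝ → Fin n → ℝ)
    (hx : ∀ g l, x g l =
        (Aᵀ * R⁻¹ * A * Qf g + (l ^ 2) • (1 : Matrix (Fin n) (Fin n) ℝ))⁻¹ *ᵥ
          (Aᵀ *ᵥ (R⁻¹ *ᵥ b)))
    (Afull : ℝ → ℝ → Matrix (Fin m) (Fin m) ℝ)
    (hAfull : ∀ g l, Afull g l = LR * A * Qf g *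
        ((Qf g)ᵀ * Aᵀ * R⁻¹ * A * Qf g + (l ^ 2) • Qf g)⁻¹ * (Qf g)ᵀ * Aᵀ * LRᵀ)
    (Ufull : ℝ → ℝ → ℝ)
    (hUfull : ∀ g l, Ufull g l =
        (1 / (m : ℝ)) *
          (((LR * A * Qf g) *ᵥ x g l - LR *ᵥ b) ⬝ᵥ ((LR * A * Qf g) *ᵥ x g l - LR *ᵥ b))
        + (2 * sq / (m : ℝ)) * (Afull g l).trace - sq)
    (γstar lamstar : ℝ) (hγ0 : 0 < γstar) (hγ1 : γstar ≤ 1) (hlam : 0 < lamstar) :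
    (∀ g l : ℝ, 0 < g → g ≤ 1 → 0 < l → Uproj γstar lamstar ≤ Uproj g l) ↔
    (∀ g l : ℝ, 0 < g → g ≤ 1 → 0 < l → Ufull γstar lamstar ≤ Ufull g l) := by
  -- symmetries
  have hQ1s : Q₁ᵀ = Q₁ := by
    rw [← conjTranspose_eq_transpose_of_trivial]; exact hQ1.1
  have hQ2s : Q₂ᵀ = Q₂ := by
    rw [← conjTranspose_eq_transpose_of_trivial]; exact hQ2.1
  have hQgs : ∀ g : ℝ, (Qf g)ᵀ = Qf g := by
    intro g; rw [hQf]; simp [transpose_add, transpose_smul, hQ1s, hQ2s]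
  -- m ≠ 0
  have hm0 : (m : ℝ) ≠ 0 := by
    have : m ≠ 0 := by
      intro h
      subst h
      have := congrFun (congrFun hU 0) 0
      simp [Matrix.mul_apply, Matrix.one_apply] at this
    exact_mod_cast this
  have hmpos : (0 : ℝ) < m := lt_of_le_of_ne (Nat.cast_nonneg m) (Ne.symm hm0)
  -- V invertible
  have hVdet : IsUnit V.det := Matrix.isUnit_det_of_left_inverse hV
  set W := fromCols (LR * U) Y with hWdef
  -- W orthonormal
  have hW : Wᵀ * W = 1 := by
    rw [hWdef, transpose_fromCols, fromRows_mul_fromCols]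
    have h11 : (LR * U)ᵀ * (LR * U) = 1 := by
      rw [transpose_mul]
      calc Uᵀ * LRᵀ * (LR * U) = Uᵀ * (LRᵀ * LR) * U := by
            simp only [Matrix.mul_assoc]
        _ = 1 := by rw [← hLR, hU]
    have h21 : Yᵀ * (LR * U) = 0 := by
      have := congrArg Matrix.transpose hUY
      simpa [transpose_mul] using this
    rw [h11, h21, hUY, hY, fromBlocks_one]
  -- key1
  have key1 : ∀ g : ℝ, LR * A * Qf g * V = W * D g := by
    intro g
    have hQ2V : LR * A * Q₂ * V
        = (LR * U) * ((LR * U)ᵀ * (LR * A * Q₂ * V)) + Y * Rk := by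
      rw [← hQR]
      rw [Matrix.sub_mul, Matrix.one_mul, ← Matrix.mul_assoc]
      abel
    rw [hD, hQf, hWdef, fromCols_mul_fromRows]
    have hQ1V : LR * (A * (Q₁ * V)) = LR * U * B := by
      rw [Matrix.mul_assoc, ← Matrix.mul_assoc A Q₁ V, hAQV]
    calc LR * A * (g • Q₁ + (1 - g) • Q₂) * V
        = g • (LR * (A * (Q₁ * V))) + (1 - g) • (LR * A * Q₂ * V) := by
          rw [Matrix.mul_add, Matrix.add_mul]
          simp only [Matrix.mul_smul, Matrix.smul_mul, Matrix.mul_assoc]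
      _ = g • (LR * U * B) + (1 - g) •
            ((LR * U) * ((LR * U)ᵀ * (LR * A * Q₂ * V)) + Y * Rk) := by
          rw [hQ1V, ← hQ2V]
      _ = LR * U * (g • B + (1 - g) • ((LR * U)ᵀ * (LR * A * Q₂ * V)))
            + Y * ((1 - g) • Rk) := by
          rw [Matrix.mul_add]
          simp only [Matrix.mul_smul, smul_add]
          abel
  -- key2
  have key2 : LR *ᵥ b = W *ᵥ c := by
    rw [hc, hWdef, fromCols_mulVec_sumElim, Matrix.mulVec_zero, add_zero, ← hb,
      Matrix.mulVec_mulVec]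
  -- W preserves dot products
  have hdotW : ∀ v : Fin (n + 1) ⊕ Fin n → ℝ, (W *ᵥ v) ⬝ᵥ (W *ᵥ v) = v ⬝ᵥ v := by
    intro v
    rw [Matrix.dotProduct_mulVec, Matrix.vecMul_mulVec, hW, Matrix.vecMul_one]
  -- the per-(g,l) core
  have core : ∀ g l : ℝ, 0 < g → g ≤ 1 → 0 < l →
      (((LR * A * Qf g) *ᵥ x g l - LR *ᵥ b) ⬝ᵥ ((LR * A * Qf g) *ᵥ x g l - LR *ᵥ b)
        = (D g *ᵥ (C g l *ᵥ c) - c) ⬝ᵥ (D g *ᵥ (C g l *ᵥ c) - c))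
      ∧ (Afull g l).trace = (D g * C g l).trace := by
    intro g l hg0 hg1 hl
    have hQgpd : (Qf g).PosDef := by
      rw [hQf]
      exact (myPosDefSmul hQ1 hg0).add_posSemidef (myPosSemidefSmul hQ2 (by linarith))
    set M := Aᵀ * R⁻¹ * A * Qf g + (l ^ 2) • (1 : Matrix (Fin n) (Fin n) ℝ) with hMdef
    have hPdef : Qf g * M = Qf g * (Aᵀ * R⁻¹ * A * Qf g) + (l ^ 2) • Qf g := by
      rw [hMdef, Matrix.mul_add, Matrix.mul_smul, Matrix.mul_one]
    have hSpsd : (Qf g * (Aᵀ * R⁻¹ * A * Qf g)).PosSemidef := by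
      have h2 : Qf g * (Aᵀ * R⁻¹ * A * Qf g) = (LR * A * Qf g)ᵀ * (LR * A * Qf g) := by
        rw [hLR]
        simp only [transpose_mul, hQgs, Matrix.mul_assoc]
      rw [h2]; exact myPsdTmul _
    have hPpd : (Qf g * M).PosDef := by
      rw [hPdef]
      exact Matrix.PosDef.posSemidef_add hSpsd (myPosDefSmul hQgpd (pow_pos hl 2))
    have hPdet : IsUnit (Qf g * M).det := hPpd.det_pos.ne'.isUnit
    have hQgdet : IsUnit (Qf g).det := hQgpd.det_pos.ne'.isUnit
    have hMdet : IsUnit M.det := by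
      have := hPdet
      rw [det_mul] at this
      exact isUnit_of_mul_isUnit_right this
    -- DᵀD identity
    have hStS : (D g)ᵀ * D g = (LR * A * Qf g * V)ᵀ * (LR * A * Qf g * V) := by
      rw [key1, transpose_mul, Matrix.mul_assoc, ← Matrix.mul_assoc Wᵀ W (D g), hW,
        Matrix.one_mul]
    have hDD : (D g)ᵀ * D g = Vᵀ * (Qf g * (Aᵀ * (R⁻¹ * (A * (Qf g * V))))) := by
      rw [hStS, hLR]
      simp only [transpose_mul, hQgs, Matrix.mul_assoc]
    have hVQgV : Vᵀ * (Qf g * V) = g • (1 : Matrix (Fin n) (Fin n) ℝ)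
        + (1 - g) • (Vᵀ * (Q₂ * V)) := by
      rw [hQf, Matrix.add_mul, Matrix.mul_add]
      simp only [Matrix.smul_mul, Matrix.mul_smul]
      congr 1
      rw [← hV]
      simp only [Matrix.mul_assoc]
    -- G identity
    have hG : (D g)ᵀ * D g + (l ^ 2 * g) • (1 : Matrix (Fin n) (Fin n) ℝ)
        + (l ^ 2 * (1 - g)) • (Vᵀ * Q₂ * V) = Vᵀ * (Qf g * M) * V := by
      have e1 : Vᵀ * (Qf g * M) * V
          = Vᵀ * (Qf g * (Aᵀ * (R⁻¹ * (A * (Qf g * V))))) + (l ^ 2) • (Vᵀ * (Qf g * V)) := by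
        rw [hPdef]
        simp only [Matrix.mul_add, Matrix.add_mul, Matrix.mul_smul, Matrix.smul_mul,
          Matrix.mul_assoc]
      rw [e1, ← hDD, hVQgV, Matrix.mul_assoc Vᵀ Q₂ V]
      module
    have hGdet : IsUnit ((D g)ᵀ * D g + (l ^ 2 * g) • (1 : Matrix (Fin n) (Fin n) ℝ)
        + (l ^ 2 * (1 - g)) • (Vᵀ * Q₂ * V)).det := by
      rw [hG, det_mul, det_mul, det_transpose]
      exact (hVdet.mul hPdet).mul hVdet
    -- z and its normal equation
    have hz : ((D g)ᵀ * D g + (l ^ 2 * g) • (1 : Matrix (Fin n) (Fin n) ℝ)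
        + (l ^ 2 * (1 - g)) • (Vᵀ * Q₂ * V)) *ᵥ (C g l *ᵥ c) = (D g)ᵀ *ᵥ c := by
      rw [hC, Matrix.mulVec_mulVec, ← Matrix.mul_assoc,
        Matrix.mul_nonsing_inv _ hGdet, Matrix.one_mul]
    -- transpose of key1 with LR glued
    have h1 : Vᵀ * (Qf g * (Aᵀ * LRᵀ)) = (D g)ᵀ * Wᵀ := by
      have h0 := congrArg Matrix.transpose (key1 g)
      simpa [transpose_mul, hQgs, Matrix.mul_assoc] using h0
    -- x g l = V *ᵥ z
    have hxVz : x g l = V *ᵥ (C g l *ᵥ c) := by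
      have hMVz : M *ᵥ (V *ᵥ (C g l *ᵥ c)) = Aᵀ *ᵥ (R⁻¹ *ᵥ b) := by
        apply myCancel (show IsUnit (Vᵀ * Qf g).det by
          rw [det_mul, det_transpose]; exact hVdet.mul hQgdet)
        have lhs1 : (Vᵀ * Qf g) *ᵥ (M *ᵥ (V *ᵥ (C g l *ᵥ c)))
            = (Vᵀ * (Qf g * M) * V) *ᵥ (C g l *ᵥ c) := by
          simp only [Matrix.mulVec_mulVec, Matrix.mul_assoc]
        have rhs1 : (Vᵀ * Qf g) *ᵥ (Aᵀ *ᵥ (R⁻¹ *ᵥ b)) = (D g)ᵀ *ᵥ c := by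
          have e2 : (Vᵀ * Qf g) *ᵥ (Aᵀ *ᵥ (R⁻¹ *ᵥ b))
              = ((D g)ᵀ * Wᵀ) *ᵥ (LR *ᵥ b) := by
            rw [← h1, hLR]
            simp only [Matrix.mulVec_mulVec, Matrix.mul_assoc]
          rw [e2, key2, Matrix.mulVec_mulVec, Matrix.mul_assoc, hW, Matrix.mul_one]
        rw [lhs1, rhs1, ← hG, hz]
      rw [hx, ← hMVz, Matrix.mulVec_mulVec, Matrix.nonsing_inv_mul _ hMdet,
        Matrix.one_mulVec]
    constructor
    · -- residual equality
      have hres : (LR * A * Qf g) *ᵥ x g l - LR *ᵥ b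
          = W *ᵥ (D g *ᵥ (C g l *ᵥ c) - c) := by
        rw [hxVz, key2, Matrix.mulVec_sub]
        congr 1
        rw [Matrix.mulVec_mulVec, key1 g, ← Matrix.mulVec_mulVec]
      rw [hres, hdotW]
    · -- trace equality
      have hAfull2 : Afull g l = (LR * A * Qf g) * (Qf g * M)⁻¹ * (Qf g * (Aᵀ * LRᵀ)) := by
        rw [hAfull]
        have hinner : (Qf g)ᵀ * Aᵀ * R⁻¹ * A * Qf g + (l ^ 2) • Qf g = Qf g * M := by
          rw [hPdef, hQgs]
          simp only [Matrix.mul_assoc]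
        rw [hinner, hQgs]
        simp only [Matrix.mul_assoc]
      have htr1 : (Afull g l).trace
          = ((Qf g * M)⁻¹ * (Qf g * (Aᵀ * LRᵀ) * (LR * A * Qf g))).trace := by
        rw [hAfull2,
          Matrix.trace_mul_comm (LR * A * Qf g * (Qf g * M)⁻¹) (Qf g * (Aᵀ * LRᵀ)),
          ← Matrix.mul_assoc,
          Matrix.trace_mul_comm (Qf g * (Aᵀ * LRᵀ) * (LR * A * Qf g)) ((Qf g * M)⁻¹)]
      have htr2 : (D g * C g l).trace
          = ((Qf g * M)⁻¹ * (Qf g * (Aᵀ * LRᵀ) * (LR * A * Qf g))).trace := by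
        have hVtdet : IsUnit (Vᵀ).det := by rw [Matrix.det_transpose]; exact hVdet
        have e3 : (V⁻¹ * ((Qf g * M)⁻¹ * Vᵀ⁻¹))
              * (Vᵀ * (Qf g * (Aᵀ * (R⁻¹ * (A * (Qf g * V))))))
            = V⁻¹ * ((Qf g * M)⁻¹ * (Qf g * (Aᵀ * (R⁻¹ * (A * (Qf g * V)))))) := by
          rw [Matrix.mul_assoc, Matrix.mul_assoc,
            Matrix.nonsing_inv_mul_cancel_left _ _ hVtdet]
        have e4 : ((Qf g * M)⁻¹ * (Qf g * (Aᵀ * (R⁻¹ * (A * (Qf g * V)))))) * V⁻¹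
            = (Qf g * M)⁻¹ * (Qf g * (Aᵀ * LRᵀ) * (LR * A * Qf g)) := by
          rw [hLR]
          simp only [Matrix.mul_assoc]
          rw [Matrix.mul_nonsing_inv _ hVdet, Matrix.mul_one]
        rw [hC, Matrix.trace_mul_comm (D g) _, Matrix.mul_assoc, hG, hDD,
          Matrix.mul_inv_rev, Matrix.mul_inv_rev, e3,
          Matrix.trace_mul_comm V⁻¹ _, e4]
      rw [htr1, htr2]
  have h2n : (0:ℝ) < 2 * (n:ℝ) + 1 := by positivity
  have key : ∀ g l : ℝ, 0 < g → g ≤ 1 → 0 < l →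
      (m : ℝ) * (Ufull g l + sq) = (2 * (n : ℝ) + 1) * (Uproj g l + sq) := by
    intro g l h1 h2 h3
    obtain ⟨e1, e2⟩ := core g l h1 h2 h3
    rw [hUfull, hUproj, e1, e2]
    field_simp
    ring
  constructor
  · intro h g l h1 h2 h3
    have k1 := key γstar lamstar hγ0 hγ1 hlam
    have k2 := key g l h1 h2 h3
    have hp := h g l h1 h2 h3
    have step : (m : ℝ) * (Ufull γstar lamstar + sq) ≤ (m : ℝ) * (Ufull g l + sq) := by
      rw [k1, k2]
      exact mul_le_mul_of_nonneg_left (by linarith) h2n.le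
    have := (mul_le_mul_iff_right₀ hmpos).mp step
    linarith
  · intro h g l h1 h2 h3
    have k1 := key γstar lamstar hγ0 hγ1 hlam
    have k2 := key g l h1 h2 h3
    have hp := h g l h1 h2 h3
    have step : (2 * (n : ℝ) + 1) * (Uproj γstar lamstar + sq)
        ≤ (2 * (n : ℝ) + 1) * (Uproj g l + sq) := by
      rw [← k1, ← k2]
      exact mul_le_mul_of_nonneg_left (by linarith) hmpos.le
    have := (mul_le_mul_iff_right₀ h2n).mp step
    linarith
end

section
/- (Weighted GCV at k = n) Assume the mixGK setup with k = n and set ω = (2n+1)/m. For 0 < γ ≤ 1 and λ > 0 define C_n(γ,λ) = (D_n(γ)ᵀD_n(γ) + λ²γI_n + λ²(1−γ)V_nᵀQ₂V_n)⁻¹ D_n(γ)ᵀ, and suppose tr(D_n(γ)C_n(γ,λ)) < m for all such (γ,λ). Then: (i) tr(I_{2n+1} − ω D_n(γ)C_n(γ,λ)) = ((2n+1)/m)(m − tr(D_n(γ)C_n(γ,λ))); and (ii) with x(γ,λ) = (AᵀR⁻¹AQ + λ²I_n)⁻¹AᵀR⁻¹b and A(γ,λ) = L_R A Q (QᵀAᵀR⁻¹AQ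 + λ²Q)⁻¹ QᵀAᵀL_Rᵀ, defining W_proj(γ,λ) = ‖D_n(γ)C_n(γ,λ)c − c‖₂² / (tr(I_{2n+1} − ω D_n(γ)C_n(γ,λ)))² and G_full(γ,λ) = ‖L_R A Q x(γ,λ) − L_R b‖₂² / (tr(I_m − A(γ,λ)))², a pair (γ*,λ*) minimizes W_proj over 0 < γ ≤ 1, λ > 0 if and only if it minimizes G_full over the same set. -/
open Matrix

private lemma smulPosDef {k : ℕ} {M : Matrix (Fin k) (Fin k) ℝ} (h : M.PosDef) {a : ℝ}
    (ha : 0 < a) : (a • M).PosDef := by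
  exact h.smul ha

private lemma smulPosSemidef {k : ℕ} {M : Matrix (Fin k) (Fin k) ℝ} (h : M.PosSemidef) {a : ℝ}
    (ha : 0 ≤ a) : (a • M).PosSemidef := by
  exact h.smul ha

theorem stmt_19 {m n : ℕ}
    (A : Matrix (Fin m) (Fin n) ℝ) (R LR : Matrix (Fin m) (Fin m) ℝ)
    (Q₁ Q₂ : Matrix (Fin n) (Fin n) ℝ) (b : Fin m → ℝ) (β₁ : ℝ)
    (U : Matrix (Fin m) (Fin (n + 1)) ℝ) (V : Matrix (Fin n) (Fin n) ℝ)
    (B : Matrix (Fin (n + 1)) (Fin n) ℝ)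
    (Y : Matrix (Fin m) (Fin n) ℝ) (Rk : Matrix (Fin n) (Fin n) ℝ)
    (hR : R.PosDef) (hLR : R⁻¹ = LRᵀ * LR)
    (hQ1 : Q₁.PosDef) (hQ2 : Q₂.PosSemidef) (hβ : 0 < β₁)
    (hb : U *ᵥ (β₁ • (Pi.single 0 1 : Fin (n + 1) → ℝ)) = b)
    (hAQV : A * Q₁ * V = U * B)
    (hU : Uᵀ * R⁻¹ * U = 1) (hV : Vᵀ * Q₁ * V = 1)
    (hY : Yᵀ * Y = 1) (hUY : (LR * U)ᵀ * Y = 0)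
    (hRtri : Rk.BlockTriangular id)
    (hQR : ((1 : Matrix (Fin m) (Fin m) ℝ) - (LR * U) * (LR * U)ᵀ) * (LR * A * Q₂ * V) = Y * Rk)
    (ω : ℝ) (hω : ω = (2 * (n : ℝ) + 1) / (m : ℝ))
    (c : Fin (n + 1) ⊕ Fin n → ℝ)
    (hc : c = Sum.elim (β₁ • (Pi.single 0 1 : Fin (n + 1) → ℝ)) (0 : Fin n → ℝ))
    (Qf : ℝ → Matrix (Fin n) (Fin n) ℝ) (hQf : ∀ g, Qf g = g • Q₁ + (1 - g) • Q₂)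
    (D : ℝ → Matrix (Fin (n + 1) ⊕ Fin n) (Fin n) ℝ)
    (hD : ∀ g, D g = fromRows (g • B + (1 - g) • ((LR * U)ᵀ * (LR * A * Q₂ * V))) ((1 - g) • Rk))
    (C : ℝ → ℝ → Matrix (Fin n) (Fin (n + 1) ⊕ Fin n) ℝ)
    (hC : ∀ g l, C g l = ((D g)ᵀ * D g + (l ^ 2 * g) • (1 : Matrix (Fin n) (Fin n) ℝ)
        + (l ^ 2 * (1 - g)) • (Vᵀ * Q₂ * V))⁻¹ * (D g)ᵀ)
    (htr : ∀ g l : ℝ, 0 < g → g ≤ 1 → 0 < l → (D g * C g l).trace < (m : ℝ))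
    (x : ℝ → ℝ → Fin n → ℝ)
    (hx : ∀ g l, x g l =
        (Aᵀ * R⁻¹ * A * Qf g + (l ^ 2) • (1 : Matrix (Fin n) (Fin n) ℝ))⁻¹ *ᵥ
          (Aᵀ *ᵥ (R⁻¹ *ᵥ b)))
    (Afull : ℝ → ℝ → Matrix (Fin m) (Fin m) ℝ)
    (hAfull : ∀ g l, Afull g l = LR * A * Qf g *
        ((Qf g)ᵀ * Aᵀ * R⁻¹ * A * Qf g + (l ^ 2) • Qf g)⁻¹ * (Qf g)ᵀ * Aᵀ * LRᵀ)
    (Wproj : ℝ → ℝ → ℝ)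
    (hWproj : ∀ g l, Wproj g l =
        ((D g *ᵥ (C g l *ᵥ c) - c) ⬝ᵥ (D g *ᵥ (C g l *ᵥ c) - c)) /
          (((1 : Matrix (Fin (n + 1) ⊕ Fin n) (Fin (n + 1) ⊕ Fin n) ℝ)
            - ω • (D g * C g l)).trace) ^ 2)
    (Gfull : ℝ → ℝ → ℝ)
    (hGfull : ∀ g l, Gfull g l =
        (((LR * A * Qf g) *ᵥ x g l - LR *ᵥ b) ⬝ᵥ ((LR * A * Qf g) *ᵥ x g l - LR *ᵥ b)) /
          (((1 : Matrix (Fin m) (Fin m) ℝ) - Afull g l).trace) ^ 2) :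
    (∀ g l : ℝ, 0 < g → g ≤ 1 → 0 < l →
      ((1 : Matrix (Fin (n + 1) ⊕ Fin n) (Fin (n + 1) ⊕ Fin n) ℝ)
          - ω • (D g * C g l)).trace =
        ((2 * (n : ℝ) + 1) / (m : ℝ)) * ((m : ℝ) - (D g * C g l).trace)) ∧
    (∀ γstar lamstar : ℝ, 0 < γstar → γstar ≤ 1 → 0 < lamstar →
      ((∀ g l : ℝ, 0 < g → g ≤ 1 → 0 < l → Wproj γstar lamstar ≤ Wproj g l) ↔
       (∀ g l : ℝ, 0 < g → g ≤ 1 → 0 < l → Gfull γstar lamstar ≤ Gfull g l))) := by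
  classical
  -- m is positive
  have hm0 : m ≠ 0 := by
    intro hm
    subst hm
    have h00 := congrFun (congrFun hU 0) 0
    simp [Matrix.mul_apply, Matrix.one_apply] at h00
  have hmpos : (0:ℝ) < (m:ℝ) := by exact_mod_cast Nat.pos_of_ne_zero hm0
  have hmne : (m:ℝ) ≠ 0 := ne_of_gt hmpos
  have h2n1 : (0:ℝ) < 2*(n:ℝ)+1 := by positivity
  have h2n1ne : (2*(n:ℝ)+1) ≠ 0 := ne_of_gt h2n1
  -- symmetry of Q₁, Q₂
  have hQ1s : Q₁ᵀ = Q₁ := by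
    have h := hQ1.1
    rw [Matrix.IsHermitian] at h
    rwa [conjTranspose_eq_transpose_of_trivial] at h
  have hQ2s : Q₂ᵀ = Q₂ := by
    have h := hQ2.1
    rw [Matrix.IsHermitian] at h
    rwa [conjTranspose_eq_transpose_of_trivial] at h
  -- V invertible
  have hVdet : IsUnit V.det := by
    refine IsUnit.of_mul_eq_one (Vᵀ.det * Q₁.det) ?_
    rw [mul_comm, ← Matrix.det_mul, ← Matrix.det_mul, hV, Matrix.det_one]
  have hVtdet : IsUnit Vᵀ.det := by rwa [Matrix.det_transpose]
  -- orthonormality of Z = [LR*U, Y]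
  have hUtU : (LR*U)ᵀ * (LR*U) = 1 := by
    have e : (LR*U)ᵀ * (LR*U) = Uᵀ * (LRᵀ * LR) * U := by
      rw [transpose_mul]; simp only [Matrix.mul_assoc]
    rw [e, ← hLR, hU]
  have hYU : Yᵀ * (LR*U) = 0 := by
    have := congrArg Matrix.transpose hUY
    simpa [transpose_mul] using this
  have hZtZ : (fromCols (LR*U) Y)ᵀ * (fromCols (LR*U) Y) = 1 := by
    rw [transpose_fromCols, fromRows_mul_fromCols, hUtU, hY, hUY, hYU, fromBlocks_one]
  have hZc : (fromCols (LR*U) Y) *ᵥ c = LR *ᵥ b := by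
    rw [hc, fromCols_mulVec_sumElim, Matrix.mulVec_zero, add_zero,
      ← Matrix.mulVec_mulVec, hb]
  -- core equalities for each admissible (g, l)
  have core : ∀ g l : ℝ, 0 < g → g ≤ 1 → 0 < l →
      (Afull g l).trace = (D g * C g l).trace ∧
      (((LR * A * Qf g) *ᵥ x g l - LR *ᵥ b) ⬝ᵥ ((LR * A * Qf g) *ᵥ x g l - LR *ᵥ b))
        = ((D g *ᵥ (C g l *ᵥ c) - c) ⬝ᵥ (D g *ᵥ (C g l *ᵥ c) - c)) := by
    intro g l hg hg1 hl
    have hQgdef : Qf g = g • Q₁ + (1-g) • Q₂ := hQf g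
    set Qg := Qf g with hQg
    have hQgPD : Qg.PosDef := by
      rw [hQgdef]
      exact (smulPosDef hQ1 hg).add_posSemidef (smulPosSemidef hQ2 (by linarith))
    have hQgs : Qgᵀ = Qg := by
      rw [hQgdef]; simp [transpose_add, transpose_smul, hQ1s, hQ2s]
    have hQgdet : IsUnit Qg.det := isUnit_iff_ne_zero.mpr hQgPD.det_pos.ne'
    set N := LR * A * Qg with hN
    set P := Qgᵀ * Aᵀ * R⁻¹ * A * Qg with hPdef
    have hP : P = Nᵀ * N := by
      rw [hPdef, hN, hLR, transpose_mul, transpose_mul]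
      simp only [Matrix.mul_assoc]
    set K := P + (l^2) • Qg with hK
    have hKPD : K.PosDef := by
      rw [hK, hP]
      have h1 : (Nᵀ * N).PosSemidef := by
        have := posSemidef_conjTranspose_mul_self N
        rwa [conjTranspose_eq_transpose_of_trivial] at this
      exact Matrix.PosDef.posSemidef_add h1 (smulPosDef hQgPD (by positivity))
    have hKdet : IsUnit K.det := isUnit_iff_ne_zero.mpr hKPD.det_pos.ne'
    set S := Aᵀ * R⁻¹ * A * Qg + (l^2) • (1 : Matrix (Fin n) (Fin n) ℝ) with hS
    have hQS : Qg * S = K := by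
      rw [hS, hK, hPdef, Matrix.mul_add]
      congr 1
      · rw [hQgs]; simp only [Matrix.mul_assoc]
      · rw [Matrix.mul_smul, Matrix.mul_one]
    have hSdet : IsUnit S.det := by
      have h1 : IsUnit (Qg.det * S.det) := by rw [← Matrix.det_mul, hQS]; exact hKdet
      exact isUnit_of_mul_isUnit_right h1
    have hSinv : S⁻¹ = K⁻¹ * Qg := by
      apply Matrix.inv_eq_left_inv
      rw [Matrix.mul_assoc, hQS, Matrix.nonsing_inv_mul K hKdet]
    -- Z * D g = N * V
    have hUB : LR * (U * B) = LR * (A * (Q₁ * V)) := by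
      rw [← hAQV]; simp only [Matrix.mul_assoc]
    have hYRk : Y * Rk = LR * (A * (Q₂ * V)) - LR * U * ((LR*U)ᵀ * (LR * (A * (Q₂ * V)))) := by
      rw [← hQR]
      simp only [Matrix.sub_mul, Matrix.one_mul, Matrix.mul_assoc]
    have hZD : (fromCols (LR*U) Y) * D g = N * V := by
      rw [hD g, fromCols_mul_fromRows, hN, hQgdef]
      simp only [Matrix.mul_add, Matrix.add_mul, Matrix.mul_smul, Matrix.smul_mul,
        Matrix.mul_assoc, hYRk, hUB]
      module
    have hDg : D g = (fromCols (LR*U) Y)ᵀ * (N * V) := by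
      rw [← hZD, ← Matrix.mul_assoc, hZtZ, Matrix.one_mul]
    -- the regularized projected matrix equals Vᵀ K V
    have hDtD : (D g)ᵀ * D g = Vᵀ * P * V := by
      have e1 : (D g)ᵀ * D g = ((fromCols (LR*U) Y) * D g)ᵀ * ((fromCols (LR*U) Y) * D g) := by
        rw [transpose_mul, Matrix.mul_assoc, ← Matrix.mul_assoc _ _ (D g), hZtZ, Matrix.one_mul]
      rw [e1, hZD, hP, transpose_mul]
      simp only [Matrix.mul_assoc]
    have hV' : Vᵀ * (Q₁ * V) = 1 := by rw [← Matrix.mul_assoc]; exact hV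
    have hVQV : Vᵀ * Qg * V = g • (1 : Matrix (Fin n) (Fin n) ℝ) + (1-g) • (Vᵀ * Q₂ * V) := by
      rw [hQgdef]
      simp only [Matrix.mul_add, Matrix.add_mul, Matrix.mul_smul, Matrix.smul_mul,
        Matrix.mul_assoc, hV']
    have hregK : (D g)ᵀ * D g + (l ^ 2 * g) • (1 : Matrix (Fin n) (Fin n) ℝ)
        + (l ^ 2 * (1 - g)) • (Vᵀ * Q₂ * V) = Vᵀ * K * V := by
      rw [hK]
      have e2 : Vᵀ * (P + l ^ 2 • Qg) * V
          = Vᵀ * P * V + (l^2) • (Vᵀ * Qg * V) := by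
        simp only [Matrix.mul_add, Matrix.add_mul, Matrix.mul_smul, Matrix.smul_mul]
      rw [e2, hVQV, hDtD, smul_add, smul_smul, smul_smul]
      abel
    have hCgl : C g l = (Vᵀ * K * V)⁻¹ * (D g)ᵀ := by
      rw [hC g l, hregK]
    have hreginv : (Vᵀ * K * V)⁻¹ = V⁻¹ * (K⁻¹ * (Vᵀ)⁻¹) := by
      rw [Matrix.mul_inv_rev, Matrix.mul_inv_rev]
    -- traces
    have htrDC : (D g * C g l).trace = (K⁻¹ * P).trace := by
      rw [hCgl, Matrix.trace_mul_comm, Matrix.mul_assoc, hDtD, hreginv]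
      have e3 : V⁻¹ * (K⁻¹ * Vᵀ⁻¹) * (Vᵀ * P * V) = V⁻¹ * (K⁻¹ * P * V) := by
        rw [Matrix.mul_assoc Vᵀ P V, Matrix.mul_assoc, Matrix.mul_assoc, ← Matrix.mul_assoc Vᵀ⁻¹,
          Matrix.nonsing_inv_mul Vᵀ hVtdet, Matrix.one_mul, ← Matrix.mul_assoc]
        simp only [Matrix.mul_assoc]
      rw [e3, Matrix.trace_mul_comm, Matrix.mul_assoc, Matrix.mul_nonsing_inv V hVdet,
        Matrix.mul_one]
    have htrA : (Afull g l).trace = (K⁻¹ * P).trace := by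
      rw [hAfull g l, ← hQg, ← hPdef, ← hK]
      have e4 : N * K⁻¹ * Qgᵀ * Aᵀ * LRᵀ = N * K⁻¹ * Nᵀ := by
        rw [hN, transpose_mul, transpose_mul]
        simp only [Matrix.mul_assoc]
      rw [e4, Matrix.trace_mul_comm, ← Matrix.mul_assoc Nᵀ N K⁻¹, ← hP,
        Matrix.trace_mul_comm]
    -- vectors
    have hDtc : (D g)ᵀ *ᵥ c = (Vᵀ * (Qg * (Aᵀ * R⁻¹))) *ᵥ b := by
      rw [hDg, transpose_mul, transpose_transpose, ← Matrix.mulVec_mulVec, hZc,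
        Matrix.mulVec_mulVec]
      congr 1
      rw [transpose_mul, hN, transpose_mul, transpose_mul, hQgs, hLR]
      simp only [Matrix.mul_assoc]
    have hy : C g l *ᵥ c = (V⁻¹ * (K⁻¹ * (Qg * (Aᵀ * R⁻¹)))) *ᵥ b := by
      rw [hCgl, ← Matrix.mulVec_mulVec, hDtc, Matrix.mulVec_mulVec]
      congr 1
      rw [hreginv, Matrix.mul_assoc V⁻¹, Matrix.mul_assoc K⁻¹, ← Matrix.mul_assoc Vᵀ⁻¹ Vᵀ,
        Matrix.nonsing_inv_mul Vᵀ hVtdet, Matrix.one_mul]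
    have hmat : (N * V) * (V⁻¹ * (K⁻¹ * (Qg * (Aᵀ * R⁻¹)))) = N * S⁻¹ * Aᵀ * R⁻¹ := by
      rw [hSinv, Matrix.mul_assoc N V, ← Matrix.mul_assoc V V⁻¹,
        Matrix.mul_nonsing_inv V hVdet, Matrix.one_mul]
      simp only [Matrix.mul_assoc]
    have hrhs : (LR * A * Qf g) *ᵥ x g l = (N * S⁻¹ * Aᵀ * R⁻¹) *ᵥ b := by
      rw [hx g l, ← hQg, ← hS, ← hN, Matrix.mulVec_mulVec, Matrix.mulVec_mulVec,
        Matrix.mulVec_mulVec]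
    have hfull : (fromCols (LR*U) Y) *ᵥ (D g *ᵥ (C g l *ᵥ c)) = (LR * A * Qf g) *ᵥ x g l := by
      rw [hy, Matrix.mulVec_mulVec, Matrix.mulVec_mulVec, hZD, hmat, hrhs]
    have hZs : (fromCols (LR*U) Y) *ᵥ (D g *ᵥ (C g l *ᵥ c) - c)
        = (LR * A * Qf g) *ᵥ x g l - LR *ᵥ b := by
      rw [Matrix.mulVec_sub, hfull, hZc]
    constructor
    · rw [htrA, htrDC]
    · rw [← hZs, Matrix.dotProduct_mulVec, ← Matrix.mulVec_transpose, Matrix.mulVec_mulVec,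
        hZtZ, Matrix.one_mulVec]
  -- Part (i)
  have part1 : ∀ g l : ℝ, 0 < g → g ≤ 1 → 0 < l →
      ((1 : Matrix (Fin (n + 1) ⊕ Fin n) (Fin (n + 1) ⊕ Fin n) ℝ)
          - ω • (D g * C g l)).trace =
        ((2 * (n : ℝ) + 1) / (m : ℝ)) * ((m : ℝ) - (D g * C g l).trace) := by
    intro g l _ _ _
    rw [Matrix.trace_sub, Matrix.trace_smul, Matrix.trace_one, hω]
    have hcard : (Fintype.card (Fin (n + 1) ⊕ Fin n) : ℝ) = 2*(n:ℝ)+1 := by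
      simp [Fintype.card_sum]
      push_cast
      ring
    rw [hcard, smul_eq_mul]
    field_simp
  refine ⟨part1, ?_⟩
  -- Part (ii)
  have hWG : ∀ g l : ℝ, 0 < g → g ≤ 1 → 0 < l →
      Wproj g l = ((m:ℝ)/(2*(n:ℝ)+1))^2 * Gfull g l := by
    intro g l hg hg1 hl
    obtain ⟨htrace, hnum⟩ := core g l hg hg1 hl
    have hd : (0:ℝ) < (m:ℝ) - (D g * C g l).trace := by
      have := htr g l hg hg1 hl; linarith
    have hdne : (m:ℝ) - (D g * C g l).trace ≠ 0 := ne_of_gt hd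
    have hGden : ((1 : Matrix (Fin m) (Fin m) ℝ) - Afull g l).trace
        = (m:ℝ) - (D g * C g l).trace := by
      rw [Matrix.trace_sub, Matrix.trace_one, htrace]
      simp
    rw [hWproj g l, hGfull g l, ← hnum, part1 g l hg hg1 hl, hGden]
    field_simp
  intro γs ls h1 h2 h3
  have hκ : (0:ℝ) < ((m:ℝ)/(2*(n:ℝ)+1))^2 := by positivity
  constructor
  · intro H g l hg hg1 hl
    have h := H g l hg hg1 hl
    rw [hWG γs ls h1 h2 h3, hWG g l hg hg1 hl] at h
    exact le_of_mul_le_mul_left h hκ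
  · intro H g l hg hg1 hl
    have h := H g l hg hg1 hl
    rw [hWG γs ls h1 h2 h3, hWG g l hg hg1 hl]
    exact mul_le_mul_of_nonneg_left h (le_of_lt hκ)
end
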